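/- arXiv:math/0309107 — 5 statements merged into one kernel-verified Lean document; each statement's English description precedes it below -/
import Mathlib

section
/- The limit map 𝔤 : Y → ℂ is injective and is a homeomorphism onto its image, where ℤ^ℕ carries the order topology of the lexicographic order and ℤ^ℕ × ℝ the product topology. Moreover, for every (s,t) ∈ Y the point 𝔤(s,t) lies in I(E_κ) if and only if (s,t) ∈ X, and 𝔤(s,t) has external address s, i.e. Im(E_κ^{n−1}(𝔤(s,t))) ∈ ((2s_n − 1)π, (2s_n + 1)π) for all n ≥ 1. -/
open Filter Topology ENNReal

noncomputable section

/-- The space of external addresses: integer sequences (indexed from 0, so index `k`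
corresponds to the entry `s_{k+1}` of the paper) with the lexicographic order. -/
abbrev Addr : Type := Lex (ℕ → ℤ)

/-- The shift map `σ` on external addresses. -/
def shiftA (s : Addr) : Addr := toLex (fun n => ofLex s (n + 1))

/-- The model growth function `F(t) = e^t - 1`. -/
def Fexp (t : ℝ) : ℝ := Real.exp t - 1

/-- The model map `𝓕(s,t) = (σ s, F t - 2π |s₂|)`. -/
def Fmod (p : Addr × ℝ) : Addr × ℝ :=
  (shiftA p.1, Fexp p.2 - 2 * Real.pi * |((ofLex p.1 1 : ℤ) : ℝ)|)

/-- The model set `X̄ = {(s,t) : T(𝓕ⁿ(s,t)) ≥ 0 for all n ≥ 0}`. -/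
def Xbar : Set (Addr × ℝ) := {p | ∀ n : ℕ, 0 ≤ (Fmod^[n] p).2}

/-- The model escaping set `X = {(s,t) ∈ X̄ : T(𝓕ⁿ(s,t)) → ∞}`. -/
def Xset : Set (Addr × ℝ) :=
  {p | p ∈ Xbar ∧ Tendsto (fun n : ℕ => (Fmod^[n] p).2) atTop atTop}

/-- The minimal potential `t_s ∈ [0,∞]` of an address (`∞` if `(s,t) ∉ X̄` for all `t ≥ 0`). -/
def tS (s : Addr) : ℝ≥0∞ :=
  sInf (ENNReal.ofReal '' {t : ℝ | 0 ≤ t ∧ (s, t) ∈ Xbar})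

/-- The exponential map `E_κ(z) = e^z + κ`. -/
def Eexp (κ : ℂ) (z : ℂ) : ℂ := Complex.exp z + κ

/-- The escaping set `I(E_κ)`. -/
def escapingSet (κ : ℂ) : Set ℂ :=
  {z | Tendsto (fun n : ℕ => ‖(Eexp κ)^[n] z‖) atTop atTop}

/-- The order topology induced by the lexicographic order on external addresses. -/
instance : TopologicalSpace Addr := Preorder.topology Addr
instance : OrderTopology Addr := ⟨rfl⟩

/-- The constant `Q(K) = max(log(4(K+π+3)), π+2)`. -/
def Qconst (K : ℝ) : ℝ := max (Real.log (4 * (K + Real.pi + 3))) (Real.pi + 2)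

/-- `Y_Q = {(s,t) ∈ X̄ : T(𝓕ⁿ(s,t)) ≥ Q for all n}`. -/
def Yset (Q : ℝ) : Set (Addr × ℝ) :=
  {p | p ∈ Xbar ∧ ∀ n : ℕ, Q ≤ (Fmod^[n] p).2}

/-- `Z(s,t) = t + 2πi s₁`. -/
def Zc (p : Addr × ℝ) : ℂ :=
  (p.2 : ℂ) + 2 * Real.pi * Complex.I * ((ofLex p.1 0 : ℤ) : ℂ)

/-- The approximating maps `𝔤_k`: `𝔤₀ = Z` and
`𝔤_{k+1}(s,t) = Log(𝔤_k(𝓕(s,t)) - κ) + 2πi s₁`, with `Log` the principal logarithm. -/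
def gmap (κ : ℂ) : ℕ → Addr × ℝ → ℂ
  | 0 => Zc
  | k + 1 => fun p =>
      Complex.log (gmap κ k (Fmod p) - κ) + 2 * Real.pi * Complex.I * ((ofLex p.1 0 : ℤ) : ℂ)

set_option maxHeartbeats 1000000

section AuxLemmas

lemma addr_lt_iff {a b : Addr} : a < b ↔ ∃ i, (∀ j, j < i → ofLex a j = ofLex b j) ∧ ofLex a i < ofLex b i := Iff.rfl

def cylSet (n : ℕ) (s : Addr) : Set Addr := {x | ∀ i ≤ n, ofLex x i = ofLex s i}

lemma cylSet_antitone {m n : ℕ} (h : m ≤ n) (s : Addr) : cylSet n s ⊆ cylSet m s :=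
  fun x hx i hi => hx i (hi.trans h)

lemma cyl_mem_nhds (n : ℕ) (s : Addr) : cylSet n s ∈ 𝓝 s := by
  set l : Addr := toLex (Function.update (ofLex s) (n+1) (ofLex s (n+1) - 1)) with hl
  set r : Addr := toLex (Function.update (ofLex s) (n+1) (ofLex s (n+1) + 1)) with hr
  have hls : l < s := by
    have := (Pi.toLex_update_lt_self_iff (x := ofLex s) (i := n+1)
      (a := ofLex s (n+1) - 1)).mpr (by omega)
    exact this
  have hsr : s < r := by
    have := (Pi.lt_toLex_update_self_iff (x := ofLex s) (i := n+1)
      (a := ofLex s (n+1) + 1)).mpr (by omega)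
    exact this
  refine mem_of_superset (Ioo_mem_nhds hls hsr) ?_
  rintro x ⟨hlx, hxr⟩
  intro i hi
  induction i using Nat.strong_induction_on with
  | _ i ih =>
    by_contra hne
    have hpre : ∀ j, j < i → ofLex x j = ofLex s j := fun j hj => ih j hj (hj.le.trans hi)
    rcases lt_or_gt_of_ne hne with hlt | hgt
    · -- x < l, contradiction with l < x
      have : x < l := addr_lt_iff.mpr ⟨i, fun j hj => by
          rw [hpre j hj, hl]
          simp [Function.update_of_ne (by omega : j ≠ n+1)],
        by rw [hl]; simpa [Function.update_of_ne (by omega : i ≠ n+1)] using hlt⟩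
      exact absurd hlx (asymm this)
    · have : r < x := addr_lt_iff.mpr ⟨i, fun j hj => by
          rw [hr]
          simpa [Function.update_of_ne (by omega : j ≠ n+1)] using (hpre j hj).symm,
        by rw [hr]; simpa [Function.update_of_ne (by omega : i ≠ n+1)] using hgt⟩
      exact absurd hxr (asymm this)

lemma cyl_subset_Ioi {a s : Addr} (h : a < s) : ∃ n, ∀ x : Addr, x ∈ cylSet n s → a < x := by
  obtain ⟨i, hpre, hlt⟩ := addr_lt_iff.mp h
  exact ⟨i, fun x hx => addr_lt_iff.mpr ⟨i, fun j hj => (hpre j hj).trans (hx j hj.le).symm,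
    by rw [hx i le_rfl]; exact hlt⟩⟩

lemma cyl_subset_Iio {s b : Addr} (h : s < b) : ∃ n, ∀ x : Addr, x ∈ cylSet n s → x < b := by
  obtain ⟨i, hpre, hlt⟩ := addr_lt_iff.mp h
  exact ⟨i, fun x hx => addr_lt_iff.mpr ⟨i, fun j hj => (hx j hj.le).trans (hpre j hj),
    by rw [hx i le_rfl]; exact hlt⟩⟩

lemma exists_cyl_subset {s : Addr} {U : Set Addr} (hU : U ∈ 𝓝 s) : ∃ n, cylSet n s ⊆ U := by
  have hl : ∃ l : Addr, l < s :=
    ⟨toLex (Function.update (ofLex s) 0 (ofLex s 0 - 1)), by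
      have := (Pi.toLex_update_lt_self_iff (x := ofLex s) (i := 0) (a := ofLex s 0 - 1)).mpr
        (by omega)
      simpa using this⟩
  have hu : ∃ u : Addr, s < u :=
    ⟨toLex (Function.update (ofLex s) 0 (ofLex s 0 + 1)), by
      have := (Pi.lt_toLex_update_self_iff (x := ofLex s) (i := 0) (a := ofLex s 0 + 1)).mpr
        (by omega)
      simpa using this⟩
  obtain ⟨a, b, ⟨has, hsb⟩, hab⟩ := (mem_nhds_iff_exists_Ioo_subset' hl hu).mp hU
  obtain ⟨n₁, h₁⟩ := cyl_subset_Ioi has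
  obtain ⟨n₂, h₂⟩ := cyl_subset_Iio hsb
  exact ⟨max n₁ n₂, fun x hx => hab ⟨h₁ x (cylSet_antitone (le_max_left _ _) s hx),
    h₂ x (cylSet_antitone (le_max_right _ _) s hx)⟩⟩
lemma iterate_fst (p : Addr × ℝ) (n : ℕ) :
    (Fmod^[n] p).1 = toLex (fun i => ofLex p.1 (i + n)) := by
  induction n with
  | zero => rfl
  | succ n ih =>
    rw [Function.iterate_succ_apply', Fmod]
    simp only [ih, shiftA]
    congr 1
    funext i
    simp [add_assoc, add_comm 1 n]

lemma iterate_snd_succ (p : Addr × ℝ) (n : ℕ) :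
    (Fmod^[n+1] p).2 = Fexp (Fmod^[n] p).2 - 2 * Real.pi * |((ofLex p.1 (n+1) : ℤ) : ℝ)| := by
  rw [Function.iterate_succ_apply', Fmod]
  simp [iterate_fst, Nat.add_comm]

lemma Fmod_iterate_mem_Yset {Q : ℝ} {p : Addr × ℝ} (hp : p ∈ Yset Q) (n : ℕ) :
    Fmod^[n] p ∈ Yset Q := by
  constructor
  · intro m; rw [← Function.iterate_add_apply]; exact hp.1 (m + n)
  · intro m; rw [← Function.iterate_add_apply]; exact hp.2 (m + n)

lemma Yset_snd {Q : ℝ} {p : Addr × ℝ} (hp : p ∈ Yset Q) : Q ≤ p.2 := by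
  have := hp.2 0; simpa using this

lemma Zc_re (p : Addr × ℝ) : (Zc p).re = p.2 := by simp [Zc]
lemma Zc_im (p : Addr × ℝ) : (Zc p).im = 2 * Real.pi * ((ofLex p.1 0 : ℤ) : ℝ) := by simp [Zc]

lemma Qconst_exp {K : ℝ} (hK : 2 * Real.pi + 6 < K) : 4 * (K + Real.pi + 3) ≤ Real.exp (Qconst K) := by
  have hπ := Real.pi_pos
  have hpos : (0:ℝ) < 4 * (K + Real.pi + 3) := by nlinarith
  calc 4 * (K + Real.pi + 3) = Real.exp (Real.log (4 * (K + Real.pi + 3))) :=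
        (Real.exp_log hpos).symm
    _ ≤ Real.exp (Qconst K) := Real.exp_le_exp.mpr (le_max_left _ _)

lemma core {K : ℝ} (hK : 2 * Real.pi + 6 < K) {κ : ℂ} (hκ : ‖κ‖ ≤ K)
    {p : Addr × ℝ} (hp0 : Qconst K ≤ p.2) (hp1 : Qconst K ≤ (Fmod p).2)
    {u : ℂ} (hu : ‖u - Zc (Fmod p)‖ ≤ Real.pi + 2) :
    (u - κ) ∈ Complex.slitPlane ∧
    |Complex.arg (u - κ)| ≤ Real.pi - 0.4 ∧
    p.2 - 2 ≤ Real.log (‖u - κ‖) ∧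
    Real.log (‖u - κ‖) ≤ p.2 + 1 := by
  have hπ : 3.14 < Real.pi := by
    have := Real.pi_gt_d6; linarith
  have hπ4 : Real.pi ≤ 4 := by linarith [Real.pi_le_four]
  set t := p.2 with ht
  set Z' := Zc (Fmod p) with hZ'
  set w := u - κ with hw
  set c := 2 * Real.pi * |((ofLex p.1 1 : ℤ) : ℝ)| with hcdef
  have hc0 : 0 ≤ c := by positivity
  have hZre : Z'.re = Real.exp t - 1 - c := by
    rw [hZ', Zc_re]; rfl
  have hZim : |Z'.im| = c := by
    rw [hZ', Zc_im]
    show |2 * Real.pi * ((ofLex (shiftA p.1) 0 : ℤ) : ℝ)| = c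
    have : ofLex (shiftA p.1) 0 = ofLex p.1 1 := rfl
    rw [this, hcdef, abs_mul]
    rw [abs_of_pos (by positivity : (0:ℝ) < 2 * Real.pi)]
  have ht1 : Qconst K ≤ Real.exp t - 1 - c := by rw [← hZre, hZ', Zc_re]; exact hp1
  have hQt : Qconst K ≤ t := hp0
  have hexpQ : 4 * (K + Real.pi + 3) ≤ Real.exp (Qconst K) := Qconst_exp hK
  have hexpt : 4 * (K + Real.pi + 3) ≤ Real.exp t := by
    calc 4 * (K + Real.pi + 3) ≤ Real.exp (Qconst K) := hexpQ
      _ ≤ Real.exp t := Real.exp_le_exp.mpr hQt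
  have hQ0 : 0 < Qconst K := lt_of_lt_of_le (by linarith) (le_max_right _ _)
  have habsZle : ‖Z'‖ ≤ Real.exp t - 1 := by
    calc ‖Z'‖ ≤ |Z'.re| + |Z'.im| := Complex.norm_le_abs_re_add_abs_im Z'
      _ = (Real.exp t - 1 - c) + c := by
          rw [hZim, hZre, abs_of_nonneg (by nlinarith : (0:ℝ) ≤ Real.exp t - 1 - c)]
      _ = Real.exp t - 1 := by ring
  have habsZge_re : Real.exp t - 1 - c ≤ ‖Z'‖ := by
    rw [← hZre]; exact Complex.re_le_norm Z'
  have habsZge_im : c ≤ ‖Z'‖ := hZim ▸ Complex.abs_im_le_norm Z'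
  have habsZge : (Real.exp t - 1) / 2 ≤ ‖Z'‖ := by linarith
  have hwZ : ‖w - Z'‖ ≤ K + (Real.pi + 2) := by
    have : w - Z' = (u - Z') - κ := by rw [hw]; ring
    rw [this]
    have h0 : (u - Z') - κ = (u - Z') + (-κ) := by ring
    rw [h0]
    calc ‖(u - Z') + (-κ)‖ ≤ ‖u - Z'‖ + ‖-κ‖ :=
          norm_add_le _ _
      _ = ‖u - Z'‖ + ‖κ‖ := by rw [norm_neg]
      _ ≤ K + (Real.pi + 2) := by linarith
  have hw_up : ‖w‖ ≤ Real.exp t + (K + Real.pi + 1) := by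
    calc ‖w‖ = ‖Z' + (w - Z')‖ := by ring_nf
      _ ≤ ‖Z'‖ + ‖w - Z'‖ := norm_add_le _ _
      _ ≤ Real.exp t + (K + Real.pi + 1) := by linarith
  have hw_lo : Real.exp t / 4 ≤ ‖w‖ := by
    have h1 : ‖Z'‖ ≤ ‖w‖ + ‖w - Z'‖ := by
      calc ‖Z'‖ = ‖w + (Z' - w)‖ := by congr 1; ring
        _ ≤ ‖w‖ + ‖Z' - w‖ := norm_add_le _ _
        _ = ‖w‖ + ‖w - Z'‖ := by rw [norm_sub_rev Z' w]
    nlinarith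
  have hw_pos : 0 < ‖w‖ := by nlinarith [Real.exp_pos t]
  refine ⟨?_, ?_, ?_, ?_⟩
  · -- slitPlane
    rw [Complex.mem_slitPlane_iff]
    by_cases him : w.im = 0
    · left
      have hcK : c ≤ K + (Real.pi + 2) := by
        have : |Z'.im| = |(Z' - w).im| := by rw [Complex.sub_im, him, sub_zero]
        rw [this] at hZim
        calc c = |(Z' - w).im| := hZim.symm
          _ ≤ ‖Z' - w‖ := Complex.abs_im_le_norm _
          _ = ‖w - Z'‖ := by rw [← norm_neg]; ring_nf
          _ ≤ K + (Real.pi + 2) := hwZ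
      have : Z'.re - ‖w - Z'‖ ≤ w.re := by
        have h3 : |(w - Z').re| ≤ ‖w - Z'‖ := Complex.abs_re_le_norm _
        have : w.re = Z'.re + (w - Z').re := by simp
        have := abs_le.mp h3
        linarith
      rw [hZre] at this
      nlinarith
    · right; exact him
  · -- arg bound
    rcases le_or_gt 0 w.re with hre | hre
    · have := Complex.abs_arg_le_pi_div_two_iff.mpr hre
      nlinarith
    · -- Re w < 0
      have hZreW : Z'.re + (w - Z').re = w.re := by simp
      have habs_sub_re : |(w - Z').re| ≤ K + (Real.pi + 2) :=
        le_trans (Complex.abs_re_le_norm _) hwZ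
      have hc_big : Real.exp t - 1 - (K + Real.pi + 2) < c := by
        have := abs_le.mp habs_sub_re
        rw [hZre] at hZreW
        nlinarith
      have him_big : Real.exp t / 2 ≤ |w.im| := by
        have h4 : |(w - Z').im| ≤ K + (Real.pi + 2) :=
          le_trans (Complex.abs_im_le_norm _) hwZ
        have h5 : w.im = Z'.im + (w - Z').im := by simp
        have h6 := abs_le.mp h4
        have h7 : c - (K + Real.pi + 2) ≤ |w.im| := by
          have := abs_sub_abs_le_abs_sub Z'.im w.im
          have heq : |Z'.im - w.im| = |(w - Z').im| := by
            rw [Complex.sub_im]; exact abs_sub_comm _ _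
          rw [hZim, heq] at this
          linarith
        nlinarith
      -- now the sine argument
      by_contra hcon
      push_neg at hcon
      have harg_le : |Complex.arg w| ≤ Real.pi := Complex.abs_arg_le_pi w
      have hsin : Real.sin (Complex.arg w) = w.im / ‖w‖ := Complex.sin_arg w
      have hratio : 2/5 ≤ |w.im| / ‖w‖ := by
        rw [le_div_iff₀ hw_pos]
        nlinarith
      have habs_sin : 2/5 ≤ |Real.sin (Complex.arg w)| := by
        rw [hsin, abs_div, abs_of_pos hw_pos]
        exact hratio
      set a := Complex.arg w with ha
      rcases le_or_gt 0 a with ha0 | ha0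
      · have h8 : Real.pi - 0.4 < a := by rwa [abs_of_nonneg ha0] at hcon
        have h9 : a ≤ Real.pi := by rwa [abs_of_nonneg ha0] at harg_le
        have hs0 : 0 ≤ Real.sin a := Real.sin_nonneg_of_nonneg_of_le_pi ha0 h9
        have : Real.sin a = Real.sin (Real.pi - a) := (Real.sin_pi_sub a).symm
        have hle : Real.sin (Real.pi - a) ≤ Real.pi - a := Real.sin_le (by linarith)
        rw [abs_of_nonneg hs0] at habs_sin
        linarith
      · have h8 : Real.pi - 0.4 < -a := by rwa [abs_of_neg ha0] at hcon
        have h9 : -a ≤ Real.pi := by rwa [abs_of_neg ha0] at harg_le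
        have hs0 : 0 ≤ Real.sin (-a) := Real.sin_nonneg_of_nonneg_of_le_pi (by linarith) h9
        have : Real.sin (-a) = Real.sin (Real.pi - (-a)) := (Real.sin_pi_sub (-a)).symm
        have hle : Real.sin (Real.pi - (-a)) ≤ Real.pi - (-a) := Real.sin_le (by linarith)
        have : |Real.sin a| = Real.sin (-a) := by
          rw [Real.sin_neg, abs_of_nonpos (by rw [Real.sin_neg] at hs0; linarith)]
        rw [this] at habs_sin
        linarith [Real.sin_pi_sub (-a)]
  · -- log lower bound
    have h10 : Real.exp (t - 2) ≤ ‖w‖ := by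
      have he2 : (4:ℝ) ≤ Real.exp 2 := by
        have h1 : (2:ℝ) ≤ Real.exp 1 := Real.add_one_le_exp 1 |>.trans_eq' (by norm_num)
        have h2 : Real.exp 2 = Real.exp 1 * Real.exp 1 := by
          rw [← Real.exp_add]; norm_num
        nlinarith
      have : Real.exp (t - 2) ≤ Real.exp t / 4 := by
        rw [Real.exp_sub, div_le_div_iff₀ (Real.exp_pos 2) (by norm_num)]
        nlinarith [Real.exp_pos t]
      linarith
    calc t - 2 = Real.log (Real.exp (t - 2)) := (Real.log_exp _).symm
      _ ≤ Real.log (‖w‖) := Real.log_le_log (Real.exp_pos _) h10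
  · have h11 : ‖w‖ ≤ Real.exp (t + 1) := by
      have he1 : (2:ℝ) ≤ Real.exp 1 := Real.add_one_le_exp 1 |>.trans_eq' (by norm_num)
      rw [Real.exp_add]
      nlinarith
    calc Real.log (‖w‖) ≤ Real.log (Real.exp (t + 1)) :=
          Real.log_le_log hw_pos h11
      _ = t + 1 := Real.log_exp _

lemma gmap_bound {K : ℝ} (hK : 2 * Real.pi + 6 < K) {κ : ℂ} (hκ : ‖κ‖ ≤ K) :
    ∀ (k : ℕ) (p : Addr × ℝ), (∀ j ≤ k + 1, Qconst K ≤ (Fmod^[j] p).2) →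
      ‖gmap κ k p - Zc p‖ ≤ Real.pi + 2 := by
  intro k
  induction k with
  | zero =>
    intro p _
    simp [gmap]
    positivity
  | succ k ih =>
    intro p H
    have hIH : ‖gmap κ k (Fmod p) - Zc (Fmod p)‖ ≤ Real.pi + 2 := by
      apply ih
      intro j hj
      rw [← Function.iterate_succ_apply]
      exact H (j+1) (by omega)
    have hp0 : Qconst K ≤ p.2 := by have := H 0 (by omega); simpa using this
    have hp1 : Qconst K ≤ (Fmod p).2 := by have := H 1 (by omega); simpa using this
    obtain ⟨_, harg, hlog1, hlog2⟩ := core hK hκ hp0 hp1 hIH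
    have heq : gmap κ (k+1) p - Zc p = Complex.log (gmap κ k (Fmod p) - κ) - (p.2 : ℂ) := by
      show Complex.log (gmap κ k (Fmod p) - κ) + 2 * Real.pi * Complex.I * ((ofLex p.1 0 : ℤ) : ℂ)
          - ((p.2 : ℂ) + 2 * Real.pi * Complex.I * ((ofLex p.1 0 : ℤ) : ℂ)) = _
      ring
    rw [heq]
    set w := gmap κ k (Fmod p) - κ with hwdef
    have hre : |(Complex.log w - (p.2:ℂ)).re| ≤ 2 := by
      rw [Complex.sub_re, Complex.log_re, Complex.ofReal_re]
      rw [abs_le]; constructor <;> [linarith; linarith]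
    have him : |(Complex.log w - (p.2:ℂ)).im| ≤ Real.pi - 0.4 := by
      rw [Complex.sub_im, Complex.log_im, Complex.ofReal_im, sub_zero]
      exact harg
    calc ‖Complex.log w - (p.2:ℂ)‖
        ≤ |(Complex.log w - (p.2:ℂ)).re| + |(Complex.log w - (p.2:ℂ)).im| :=
          Complex.norm_le_abs_re_add_abs_im _
      _ ≤ Real.pi + 2 := by linarith

lemma gmap_succ_re (κ : ℂ) (k : ℕ) (p : Addr × ℝ) :
    (gmap κ (k+1) p).re = Real.log (‖gmap κ k (Fmod p) - κ‖) := by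
  show (Complex.log (gmap κ k (Fmod p) - κ) + 2 * Real.pi * Complex.I * ((ofLex p.1 0 : ℤ) : ℂ)).re = _
  simp [Complex.log_re]

lemma gmap_succ_im (κ : ℂ) (k : ℕ) (p : Addr × ℝ) :
    (gmap κ (k+1) p).im = Complex.arg (gmap κ k (Fmod p) - κ)
      + 2 * Real.pi * ((ofLex p.1 0 : ℤ) : ℝ) := by
  show (Complex.log (gmap κ k (Fmod p) - κ) + 2 * Real.pi * Complex.I * ((ofLex p.1 0 : ℤ) : ℂ)).im = _
  simp [Complex.log_im]

section GLimit

variable {K : ℝ} {κ : ℂ} {g : Addr × ℝ → ℂ}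

lemma Fmod_bound_forall (hK : 2 * Real.pi + 6 < K) (hκ : ‖κ‖ ≤ K)
    {p : Addr × ℝ} (hp : p ∈ Yset (Qconst K)) (k : ℕ) :
    ‖gmap κ k (Fmod p) - Zc (Fmod p)‖ ≤ Real.pi + 2 :=
  gmap_bound hK hκ k (Fmod p) (fun j _ => by
    rw [← Function.iterate_succ_apply]; exact hp.2 (j+1))

lemma g_est (hK : 2 * Real.pi + 6 < K) (hκ : ‖κ‖ ≤ K)
    (hg : TendstoUniformlyOn (gmap κ) g atTop (Yset (Qconst K)))
    {p : Addr × ℝ} (hp : p ∈ Yset (Qconst K)) :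
    p.2 - 2 ≤ (g p).re ∧ (g p).re ≤ p.2 + 1 ∧
      |(g p).im - 2 * Real.pi * ((ofLex p.1 0 : ℤ) : ℝ)| ≤ Real.pi - 0.4 := by
  have hp0 : Qconst K ≤ p.2 := Yset_snd hp
  have hp1 : Qconst K ≤ (Fmod p).2 := by have := hp.2 1; simpa using this
  have hcore := fun k => core hK hκ hp0 hp1 (Fmod_bound_forall hK hκ hp k)
  have htd : Tendsto (fun k => gmap κ (k+1) p) atTop (𝓝 (g p)) :=
    (hg.tendsto_at hp).comp (tendsto_add_atTop_nat 1)
  have hre_td : Tendsto (fun k => (gmap κ (k+1) p).re) atTop (𝓝 (g p).re) :=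
    (Complex.continuous_re.tendsto _).comp htd
  refine ⟨?_, ?_, ?_⟩
  · refine ge_of_tendsto hre_td (Eventually.of_forall fun k => ?_)
    rw [gmap_succ_re]
    exact (hcore k).2.2.1
  · refine le_of_tendsto hre_td (Eventually.of_forall fun k => ?_)
    rw [gmap_succ_re]
    exact (hcore k).2.2.2
  · have him_td : Tendsto
        (fun k => |(gmap κ (k+1) p).im - 2 * Real.pi * ((ofLex p.1 0 : ℤ) : ℝ)|) atTop
        (𝓝 |(g p).im - 2 * Real.pi * ((ofLex p.1 0 : ℤ) : ℝ)|) := by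
      apply Tendsto.abs
      exact ((Complex.continuous_im.tendsto _).comp htd).sub_const _
    refine le_of_tendsto him_td (Eventually.of_forall fun k => ?_)
    rw [gmap_succ_im, add_sub_cancel_right]
    exact (hcore k).2.1

end GLimit

lemma fst_coord_iterate (p : Addr × ℝ) (n : ℕ) :
    ofLex (Fmod^[n] p).1 0 = ofLex p.1 n := by
  rw [iterate_fst]; simp

section GLimit2

variable {K : ℝ} {κ : ℂ} {g : Addr × ℝ → ℂ}

lemma hconj_iter (hconj : ∀ p ∈ Yset (Qconst K), g (Fmod p) = Eexp κ (g p))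
    {p : Addr × ℝ} (hp : p ∈ Yset (Qconst K)) (n : ℕ) :
    g (Fmod^[n] p) = (Eexp κ)^[n] (g p) := by
  induction n with
  | zero => rfl
  | succ n ih =>
    rw [Function.iterate_succ_apply', Function.iterate_succ_apply',
      hconj _ (Fmod_iterate_mem_Yset hp n), ih]

lemma addr_eq_of_im_close (hK : 2 * Real.pi + 6 < K) (hκ : ‖κ‖ ≤ K)
    (hg : TendstoUniformlyOn (gmap κ) g atTop (Yset (Qconst K)))
    {p q : Addr × ℝ} (hp : p ∈ Yset (Qconst K)) (hq : q ∈ Yset (Qconst K))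
    (hclose : |(g p).im - (g q).im| < 1/2) : ofLex p.1 0 = ofLex q.1 0 := by
  by_contra hne
  have h1 := (g_est hK hκ hg hp).2.2
  have h2 := (g_est hK hκ hg hq).2.2
  have habs : (1:ℝ) ≤ |((ofLex p.1 0 : ℤ) : ℝ) - ((ofLex q.1 0 : ℤ) : ℝ)| := by
    have : (1:ℝ) ≤ |((ofLex p.1 0 - ofLex q.1 0 : ℤ) : ℝ)| := by
      rw [← Int.cast_abs]
      exact_mod_cast Int.one_le_abs (sub_ne_zero.mpr hne)
    push_cast at this ⊢
    exact this
  have hπ : 3.14 < Real.pi := by have := Real.pi_gt_d6; linarith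
  have := abs_sub_abs_le_abs_sub ((g p).im - 2 * Real.pi * ((ofLex p.1 0 : ℤ) : ℝ))
    ((g q).im - 2 * Real.pi * ((ofLex q.1 0 : ℤ) : ℝ))
  have htri : 2 * Real.pi * |((ofLex p.1 0 : ℤ) : ℝ) - ((ofLex q.1 0 : ℤ) : ℝ)|
      ≤ |(g p).im - (g q).im| + (Real.pi - 0.4) + (Real.pi - 0.4) := by
    have e1 : 2 * Real.pi * (((ofLex q.1 0 : ℤ) : ℝ) - ((ofLex p.1 0 : ℤ) : ℝ))
        = ((g p).im - 2 * Real.pi * ((ofLex p.1 0 : ℤ) : ℝ))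
          - ((g q).im - 2 * Real.pi * ((ofLex q.1 0 : ℤ) : ℝ)) - ((g p).im - (g q).im) := by
      ring
    have e2 : |2 * Real.pi * (((ofLex q.1 0 : ℤ) : ℝ) - ((ofLex p.1 0 : ℤ) : ℝ))|
        = 2 * Real.pi * |((ofLex p.1 0 : ℤ) : ℝ) - ((ofLex q.1 0 : ℤ) : ℝ)| := by
      rw [abs_mul, abs_of_pos (by positivity : (0:ℝ) < 2 * Real.pi), abs_sub_comm]
    calc 2 * Real.pi * |((ofLex p.1 0 : ℤ) : ℝ) - ((ofLex q.1 0 : ℤ) : ℝ)|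
        = |2 * Real.pi * (((ofLex q.1 0 : ℤ) : ℝ) - ((ofLex p.1 0 : ℤ) : ℝ))| := e2.symm
      _ ≤ |((g p).im - 2 * Real.pi * ((ofLex p.1 0 : ℤ) : ℝ))
          - ((g q).im - 2 * Real.pi * ((ofLex q.1 0 : ℤ) : ℝ))| + |(g p).im - (g q).im| := by
          rw [e1]; exact abs_sub _ _
      _ ≤ |(g p).im - 2 * Real.pi * ((ofLex p.1 0 : ℤ) : ℝ)|
          + |(g q).im - 2 * Real.pi * ((ofLex q.1 0 : ℤ) : ℝ)| + |(g p).im - (g q).im| := by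
          gcongr
          exact abs_sub _ _
      _ ≤ |(g p).im - (g q).im| + (Real.pi - 0.4) + (Real.pi - 0.4) := by linarith
  nlinarith [abs_nonneg ((g p).im - (g q).im)]

end GLimit2

section Expansion

variable {K : ℝ}

lemma exp_expand {Q x y : ℝ} (hQ : 2 ≤ Q) (hx : Q ≤ x) (hy : Q ≤ y) :
    2 * |x - y| ≤ |Real.exp x - Real.exp y| := by
  have key : ∀ a b : ℝ, Q ≤ a → Q ≤ b → b ≤ a → 2 * (a - b) ≤ Real.exp a - Real.exp b := by
    intro a b ha hb hba
    have h1 : Real.exp a - Real.exp b = Real.exp b * (Real.exp (a - b) - 1) := by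
      rw [mul_sub, ← Real.exp_add]; ring_nf
    have h2 : a - b ≤ Real.exp (a - b) - 1 := by linarith [Real.add_one_le_exp (a - b)]
    have h3 : (2:ℝ) ≤ Real.exp b := by
      have := Real.add_one_le_exp b; linarith
    rw [h1]
    nlinarith
  rcases le_total y x with h | h
  · rw [abs_of_nonneg (by linarith), abs_of_nonneg (by linarith [Real.exp_le_exp.mpr h])]
    exact key x y hx hy h
  · rw [abs_of_nonpos (by linarith), abs_of_nonpos (by linarith [Real.exp_le_exp.mpr h])]
    have := key y x hy hx h
    linarith

lemma texpand (hK : 2 * Real.pi + 6 < K) {p q : Addr × ℝ}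
    (hp : p ∈ Yset (Qconst K)) (hq : q ∈ Yset (Qconst K)) {m : ℕ}
    (hagree : ∀ i ≤ m, ofLex p.1 i = ofLex q.1 i) :
    ∀ n ≤ m, 2^n * |p.2 - q.2| ≤ |(Fmod^[n] p).2 - (Fmod^[n] q).2| := by
  have hπ : 3.14 < Real.pi := by have := Real.pi_gt_d6; linarith
  have hQ2 : (2:ℝ) ≤ Qconst K := le_trans (by linarith) (le_max_right _ _)
  intro n hn
  induction n with
  | zero => simpa using le_rfl
  | succ n ih =>
    have hih := ih (by omega)
    have ha : Qconst K ≤ (Fmod^[n] p).2 := hp.2 n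
    have hb : Qconst K ≤ (Fmod^[n] q).2 := hq.2 n
    have hstep : 2 * |(Fmod^[n] p).2 - (Fmod^[n] q).2|
        ≤ |(Fmod^[n+1] p).2 - (Fmod^[n+1] q).2| := by
      rw [iterate_snd_succ, iterate_snd_succ, hagree (n+1) hn, Fexp, Fexp]
      have : Real.exp (Fmod^[n] p).2 - 1 - 2 * Real.pi * |((ofLex q.1 (n+1) : ℤ) : ℝ)|
          - (Real.exp (Fmod^[n] q).2 - 1 - 2 * Real.pi * |((ofLex q.1 (n+1) : ℤ) : ℝ)|)
          = Real.exp (Fmod^[n] p).2 - Real.exp (Fmod^[n] q).2 := by ring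
      rw [this]
      exact exp_expand hQ2 ha hb
    calc 2^(n+1) * |p.2 - q.2| = 2 * (2^n * |p.2 - q.2|) := by ring
      _ ≤ 2 * |(Fmod^[n] p).2 - (Fmod^[n] q).2| := by linarith
      _ ≤ |(Fmod^[n+1] p).2 - (Fmod^[n+1] q).2| := hstep

end Expansion

section Inj

variable {K : ℝ} {κ : ℂ} {g : Addr × ℝ → ℂ}

lemma g_injOn (hK : 2 * Real.pi + 6 < K) (hκ : ‖κ‖ ≤ K)
    (hg : TendstoUniformlyOn (gmap κ) g atTop (Yset (Qconst K)))
    (hconj : ∀ p ∈ Yset (Qconst K), g (Fmod p) = Eexp κ (g p)) :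
    Set.InjOn g (Yset (Qconst K)) := by
  intro p hp q hq hpq
  have hgn : ∀ n, g (Fmod^[n] p) = g (Fmod^[n] q) := fun n => by
    rw [hconj_iter hconj hp, hconj_iter hconj hq, hpq]
  have haddr : ∀ n, ofLex p.1 n = ofLex q.1 n := by
    intro n
    have h := addr_eq_of_im_close hK hκ hg (Fmod_iterate_mem_Yset hp n)
      (Fmod_iterate_mem_Yset hq n) (by rw [hgn n]; norm_num)
    rwa [fst_coord_iterate, fst_coord_iterate] at h
  have hre_close : ∀ n, |(Fmod^[n] p).2 - (Fmod^[n] q).2| ≤ 3 := by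
    intro n
    have e1 := g_est hK hκ hg (Fmod_iterate_mem_Yset hp n)
    have e2 := g_est hK hκ hg (Fmod_iterate_mem_Yset hq n)
    rw [hgn n] at e1
    rw [abs_le]
    constructor <;> linarith [e1.1, e1.2.1, e2.1, e2.2.1]
  have ht : p.2 = q.2 := by
    by_contra hne
    have hd : 0 < |p.2 - q.2| := abs_pos.mpr (sub_ne_zero.mpr hne)
    obtain ⟨n, hn⟩ := pow_unbounded_of_one_lt (R := ℝ) (3 / |p.2 - q.2|) one_lt_two
    have h1 := texpand hK hp hq (fun i _ => haddr i) n le_rfl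
    have h2 := hre_close n
    rw [div_lt_iff₀ hd] at hn
    linarith
  have h1 : p.1 = q.1 := by
    have : ofLex p.1 = ofLex q.1 := funext haddr
    exact ofLex.injective this
  exact Prod.ext h1 ht

end Inj

section Escape

variable {K : ℝ} {κ : ℂ} {g : Addr × ℝ → ℂ}

lemma g_escaping_iff (hK : 2 * Real.pi + 6 < K) (hκ : ‖κ‖ ≤ K)
    (hg : TendstoUniformlyOn (gmap κ) g atTop (Yset (Qconst K)))
    (hconj : ∀ p ∈ Yset (Qconst K), g (Fmod p) = Eexp κ (g p))
    {p : Addr × ℝ} (hp : p ∈ Yset (Qconst K)) :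
    g p ∈ escapingSet κ ↔ p ∈ Xset := by
  have hπ : 3.14 < Real.pi := by have := Real.pi_gt_d6; linarith
  have habs_eq : ∀ n : ℕ, ‖(Eexp κ)^[n] (g p)‖ = ‖g (Fmod^[n] p)‖ :=
    fun n => by rw [hconj_iter hconj hp n]
  constructor
  · intro hesc
    refine ⟨fun n => le_trans ?_ (hp.2 n), ?_⟩
    · have : (0:ℝ) < Qconst K :=
        lt_of_lt_of_le (by linarith) (le_max_right _ _)
      linarith
    · by_contra hnot
      rw [tendsto_atTop] at hnot
      push_neg at hnot
      obtain ⟨M, hM⟩ := hnot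
      -- frequently, the orbit value is < M; bound the modulus at the next step
      have hfreq : ∃ᶠ n in atTop,
          ‖(Eexp κ)^[n+1] (g p)‖ ≤ Real.exp M + 1 + Real.pi := by
        refine hM.mono fun n hn => ?_
        have hq := Fmod_iterate_mem_Yset hp (n+1)
        have hest := g_est hK hκ hg hq
        have hcoord : ofLex (Fmod^[n+1] p).1 0 = ofLex p.1 (n+1) := fst_coord_iterate p (n+1)
        have hsum : (Fmod^[n+1] p).2 + 2 * Real.pi * |((ofLex p.1 (n+1) : ℤ) : ℝ)|
            = Real.exp (Fmod^[n] p).2 - 1 := by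
          rw [iterate_snd_succ]; ring_nf; rw [Fexp]; ring
        have him : |(g (Fmod^[n+1] p)).im| ≤
            2 * Real.pi * |((ofLex p.1 (n+1) : ℤ) : ℝ)| + Real.pi := by
          have h1 := hest.2.2
          rw [hcoord] at h1
          have h2 := abs_sub_abs_le_abs_sub (g (Fmod^[n+1] p)).im
            (2 * Real.pi * ((ofLex p.1 (n+1) : ℤ) : ℝ))
          have h3 : |2 * Real.pi * ((ofLex p.1 (n+1) : ℤ) : ℝ)|
              = 2 * Real.pi * |((ofLex p.1 (n+1) : ℤ) : ℝ)| := by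
            rw [abs_mul, abs_of_pos (by positivity : (0:ℝ) < 2 * Real.pi)]
          nlinarith [abs_nonneg ((ofLex p.1 (n+1) : ℤ) : ℝ)]
        have hre : |(g (Fmod^[n+1] p)).re| ≤ (Fmod^[n+1] p).2 + 1 := by
          have h0 : Real.pi + 2 ≤ Qconst K := le_max_right _ _
          have hQ := Yset_snd hq
          rw [abs_le]
          constructor <;> [linarith [hest.1]; linarith [hest.2.1]]
        have hexpM : Real.exp (Fmod^[n] p).2 ≤ Real.exp M := Real.exp_le_exp.mpr hn.le
        rw [habs_eq]
        calc ‖g (Fmod^[n+1] p)‖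
            ≤ |(g (Fmod^[n+1] p)).re| + |(g (Fmod^[n+1] p)).im| :=
              Complex.norm_le_abs_re_add_abs_im _
          _ ≤ ((Fmod^[n+1] p).2 + 1) + (2 * Real.pi * |((ofLex p.1 (n+1) : ℤ) : ℝ)| + Real.pi) := by
              linarith
          _ ≤ Real.exp M + 1 + Real.pi := by linarith
      have hfreq2 : ∃ᶠ m in atTop,
          ‖(Eexp κ)^[m] (g p)‖ ≤ Real.exp M + 1 + Real.pi :=
        (tendsto_add_atTop_nat 1).frequently hfreq
      have hev := hesc.eventually_ge_atTop (Real.exp M + 2 + Real.pi)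
      obtain ⟨m, h1, h2⟩ := (hfreq2.and_eventually hev).exists
      linarith
  · intro hX
    have : Tendsto (fun n : ℕ => (Fmod^[n] p).2 - 2) atTop atTop :=
      tendsto_atTop_add_const_right _ (-2) hX.2 |>.congr (fun n => by ring)
    refine tendsto_atTop_mono (fun n => ?_) this
    rw [habs_eq]
    calc (Fmod^[n] p).2 - 2 ≤ (g (Fmod^[n] p)).re :=
          (g_est hK hκ hg (Fmod_iterate_mem_Yset hp n)).1
      _ ≤ ‖g (Fmod^[n] p)‖ := Complex.re_le_norm _
end Escape

section Cont

variable {K : ℝ} {κ : ℂ}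

lemma cont_orbit (n : ℕ) (s : Addr) : Continuous (fun t : ℝ => (Fmod^[n] (s, t)).2) := by
  induction n with
  | zero => exact continuous_id
  | succ n ih =>
    have heq : (fun t : ℝ => (Fmod^[n+1] (s, t)).2)
        = fun t => Real.exp ((Fmod^[n] (s, t)).2) - 1
          - 2 * Real.pi * |((ofLex s (n+1) : ℤ) : ℝ)| := by
      funext t
      rw [iterate_snd_succ (s, t) n]
      rfl
    rw [heq]
    exact ((Real.continuous_exp.comp ih).sub continuous_const).sub continuous_const

lemma orbit_congr {s s' : Addr} {m : ℕ} (h : ∀ i ≤ m, ofLex s i = ofLex s' i) :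
    ∀ j ≤ m, ∀ t : ℝ, (Fmod^[j] (s, t)).2 = (Fmod^[j] (s', t)).2 := by
  intro j
  induction j with
  | zero => intro _ t; rfl
  | succ j ih =>
    intro hj t
    rw [iterate_snd_succ (s, t) j, iterate_snd_succ (s', t) j, ih (by omega) t]
    have : ofLex (s, t).1 (j+1) = ofLex (s', t).1 (j+1) := h (j+1) hj
    rw [show ofLex (s,t).1 (j+1) = ofLex s (j+1) from rfl,
      show ofLex (s',t).1 (j+1) = ofLex s' (j+1) from rfl] at this
    rw [this]

lemma gmap_addr_congr (κ : ℂ) : ∀ (k : ℕ) (s s' : Addr) (t : ℝ),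
    (∀ i ≤ k + 1, ofLex s i = ofLex s' i) → gmap κ k (s, t) = gmap κ k (s', t) := by
  intro k
  induction k with
  | zero =>
    intro s s' t h
    show Zc (s, t) = Zc (s', t)
    simp only [Zc]
    rw [show ofLex (s,t).1 0 = ofLex s 0 from rfl, show ofLex (s',t).1 0 = ofLex s' 0 from rfl,
      h 0 (by omega)]
  | succ k ih =>
    intro s s' t h
    show Complex.log (gmap κ k (Fmod (s,t)) - κ) + 2 * Real.pi * Complex.I * ((ofLex (s,t).1 0 : ℤ) : ℂ)
        = Complex.log (gmap κ k (Fmod (s',t)) - κ) + 2 * Real.pi * Complex.I * ((ofLex (s',t).1 0 : ℤ) : ℂ)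
    have hshift : ∀ i ≤ k + 1, ofLex (shiftA s) i = ofLex (shiftA s') i := by
      intro i hi
      show ofLex s (i+1) = ofLex s' (i+1)
      exact h (i+1) (by omega)
    have hsnd : (Fmod (s,t)).2 = (Fmod (s',t)).2 := by
      show Fexp t - 2 * Real.pi * |((ofLex s 1 : ℤ) : ℝ)|
          = Fexp t - 2 * Real.pi * |((ofLex s' 1 : ℤ) : ℝ)|
      rw [h 1 (by omega)]
    have hFm : gmap κ k (Fmod (s,t)) = gmap κ k (Fmod (s',t)) := by
      have e1 : Fmod (s,t) = (shiftA s, (Fmod (s,t)).2) := rfl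
      have e2 : Fmod (s',t) = (shiftA s', (Fmod (s',t)).2) := rfl
      rw [e1, e2, ← hsnd]
      exact ih (shiftA s) (shiftA s') _ hshift
    rw [hFm, show ofLex (s,t).1 0 = ofLex s 0 from rfl,
      show ofLex (s',t).1 0 = ofLex s' 0 from rfl, h 0 (by omega)]

lemma gmap_slice_cont (hK : 2 * Real.pi + 6 < K) (hκ : ‖κ‖ ≤ K) :
    ∀ (k : ℕ) (s : Addr), ContinuousOn (fun t : ℝ => gmap κ k (s, t))
      {t : ℝ | ∀ j ≤ k + 1, Qconst K ≤ (Fmod^[j] (s, t)).2} := by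
  intro k
  induction k with
  | zero =>
    intro s
    apply Continuous.continuousOn
    show Continuous fun t : ℝ => (t : ℂ) + 2 * Real.pi * Complex.I * ((ofLex s 0 : ℤ) : ℂ)
    exact Complex.continuous_ofReal.add continuous_const
  | succ k ih =>
    intro s
    intro t₀ ht₀
    have hτ : Continuous (fun t : ℝ => (Fmod (s, t)).2) := by
      have := cont_orbit 1 s
      simpa using this
    have hmap : Set.MapsTo (fun t : ℝ => (Fmod (s, t)).2)
        {t : ℝ | ∀ j ≤ k + 2, Qconst K ≤ (Fmod^[j] (s, t)).2}
        {t : ℝ | ∀ j ≤ k + 1, Qconst K ≤ (Fmod^[j] (shiftA s, t)).2} := by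
      intro t ht j hj
      have e : (Fmod^[j] (shiftA s, (Fmod (s,t)).2)) = Fmod^[j+1] (s, t) := by
        rw [Function.iterate_succ_apply]
        rfl
      rw [e]
      exact ht (j+1) (by omega)
    have hcomp' := ContinuousWithinAt.comp (g := fun t' : ℝ => gmap κ k (shiftA s, t'))
      (f := fun t : ℝ => (Fmod (s, t)).2) (x := t₀) (ih (shiftA s) _ (hmap ht₀))
      hτ.continuousWithinAt hmap
    have hcomp : ContinuousWithinAt (fun t : ℝ => gmap κ k (shiftA s, (Fmod (s, t)).2))
        {t : ℝ | ∀ j ≤ k + 2, Qconst K ≤ (Fmod^[j] (s, t)).2} t₀ := hcomp'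
    have hFeq : ∀ t : ℝ, gmap κ k (shiftA s, (Fmod (s, t)).2) = gmap κ k (Fmod (s, t)) :=
      fun t => rfl
    have hp0 : Qconst K ≤ (s, t₀).2 := by have := ht₀ 0 (by omega); simpa using this
    have hp1 : Qconst K ≤ (Fmod (s, t₀)).2 := by have := ht₀ 1 (by omega); simpa using this
    have hbound : ‖gmap κ k (Fmod (s, t₀)) - Zc (Fmod (s, t₀))‖ ≤ Real.pi + 2 := by
      apply gmap_bound hK hκ
      intro j hj
      have e : (Fmod^[j] (Fmod (s, t₀))) = Fmod^[j+1] (s, t₀) := by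
        rw [Function.iterate_succ_apply]
      rw [e]
      exact ht₀ (j+1) (by omega)
    have hslit := (core hK hκ hp0 hp1 hbound).1
    have hlog : ContinuousAt Complex.log (gmap κ k (Fmod (s, t₀)) - κ) :=
      continuousAt_clog hslit
    have hsub : ContinuousWithinAt (fun t : ℝ => gmap κ k (Fmod (s, t)) - κ)
        {t : ℝ | ∀ j ≤ k + 2, Qconst K ≤ (Fmod^[j] (s, t)).2} t₀ := by
      have : (fun t : ℝ => gmap κ k (Fmod (s, t)) - κ)
          = fun t => gmap κ k (shiftA s, (Fmod (s, t)).2) - κ := by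
        funext t; rw [hFeq]
      rw [this]
      exact hcomp.sub continuousWithinAt_const
    have hlogw := ContinuousAt.comp_continuousWithinAt (g := Complex.log)
      (f := fun t : ℝ => gmap κ k (Fmod (s, t)) - κ) hlog hsub
    have hfin : ContinuousWithinAt
        (fun t : ℝ => Complex.log (gmap κ k (Fmod (s, t)) - κ)
          + 2 * Real.pi * Complex.I * ((ofLex s 0 : ℤ) : ℂ))
        {t : ℝ | ∀ j ≤ k + 2, Qconst K ≤ (Fmod^[j] (s, t)).2} t₀ :=
      ContinuousWithinAt.add hlogw continuousWithinAt_const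
    exact hfin

lemma gmap_contOn (hK : 2 * Real.pi + 6 < K) (hκ : ‖κ‖ ≤ K) (k : ℕ) :
    ContinuousOn (gmap κ k) (Yset (Qconst K)) := by
  intro p hp
  set V : Set (Addr × ℝ) := (cylSet (k+1) p.1) ×ˢ (Set.univ : Set ℝ) with hV
  have hVmem : V ∈ 𝓝 p := prod_mem_nhds (cyl_mem_nhds (k+1) p.1) Filter.univ_mem
  have hSmem : p.2 ∈ {t : ℝ | ∀ j ≤ k + 1, Qconst K ≤ (Fmod^[j] (p.1, t)).2} := by
    intro j _
    exact hp.2 j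
  have houter := (gmap_slice_cont hK hκ k p.1) p.2 hSmem
  have hmapsTo : Set.MapsTo (fun q : Addr × ℝ => q.2) (Yset (Qconst K) ∩ V)
      {t : ℝ | ∀ j ≤ k + 1, Qconst K ≤ (Fmod^[j] (p.1, t)).2} := by
    rintro q ⟨hqY, hqV⟩ j hj
    have hagree : ∀ i ≤ k + 1, ofLex p.1 i = ofLex q.1 i := by
      intro i hi
      exact (hqV.1 i hi).symm
    rw [orbit_congr hagree j hj q.2]
    exact hqY.2 j
  have hf0 : ContinuousWithinAt (fun q : Addr × ℝ => gmap κ k (p.1, q.2))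
      (Yset (Qconst K) ∩ V) p :=
    houter.comp continuous_snd.continuousWithinAt hmapsTo
  have hcw : ContinuousWithinAt (gmap κ k) (Yset (Qconst K) ∩ V) p := by
    apply hf0.congr
    · rintro q ⟨_, hqV⟩
      have : gmap κ k (q.1, q.2) = gmap κ k (p.1, q.2) :=
        gmap_addr_congr κ k q.1 p.1 q.2 (fun i hi => hqV.1 i hi)
      simpa using this
    · have : gmap κ k (p.1, p.2) = gmap κ k (p.1, p.2) := rfl
      simpa using this
  exact (continuousWithinAt_inter hVmem).mp hcw

end Cont

section Embed

variable {K : ℝ} {κ : ℂ} {g : Addr × ℝ → ℂ}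

lemma g_contOn (hK : 2 * Real.pi + 6 < K) (hκ : ‖κ‖ ≤ K)
    (hg : TendstoUniformlyOn (gmap κ) g atTop (Yset (Qconst K))) :
    ContinuousOn g (Yset (Qconst K)) :=
  hg.continuousOn (Eventually.of_forall (gmap_contOn hK hκ)).frequently

lemma exists_eps (κ : ℂ) (z₀ : ℂ) (m : ℕ) :
    ∃ ε > (0:ℝ), ∀ z : ℂ, ‖z - z₀‖ < ε →
      ∀ j ≤ m, ‖(Eexp κ)^[j] z - (Eexp κ)^[j] z₀‖ < 1/4 := by
  induction m with
  | zero =>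
    refine ⟨1/4, by norm_num, fun z hz j hj => ?_⟩
    interval_cases j
    simpa using hz
  | succ m ih =>
    obtain ⟨ε₀, hε₀, h₀⟩ := ih
    have hc : Continuous ((Eexp κ)^[m+1]) := by
      apply Continuous.iterate
      exact Complex.continuous_exp.add continuous_const
    have hca : ContinuousAt ((Eexp κ)^[m+1]) z₀ := hc.continuousAt
    obtain ⟨δ, hδ, hδp⟩ := Metric.continuousAt_iff.mp hca (1/4) (by norm_num)
    refine ⟨min ε₀ δ, lt_min hε₀ hδ, fun z hz j hj => ?_⟩
    rcases Nat.lt_or_ge j (m+1) with h | h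
    · exact h₀ z (lt_of_lt_of_le hz (min_le_left _ _)) j (by omega)
    · have hj' : j = m + 1 := by omega
      subst hj'
      have : dist z z₀ < δ := by
        rw [Complex.dist_eq]
        exact lt_of_lt_of_le hz (min_le_right _ _)
      have := hδp this
      rwa [Complex.dist_eq] at this

lemma g_sep (hK : 2 * Real.pi + 6 < K) (hκ : ‖κ‖ ≤ K)
    (hg : TendstoUniformlyOn (gmap κ) g atTop (Yset (Qconst K)))
    (hconj : ∀ p ∈ Yset (Qconst K), g (Fmod p) = Eexp κ (g p))
    {p : Addr × ℝ} (hp : p ∈ Yset (Qconst K)) (n : ℕ) {δ : ℝ} (hδ : 0 < δ) :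
    ∃ ε > (0:ℝ), ∀ q ∈ Yset (Qconst K), ‖g q - g p‖ < ε →
      (∀ i ≤ n, ofLex q.1 i = ofLex p.1 i) ∧ |q.2 - p.2| < δ := by
  obtain ⟨m₀, hm₀⟩ := pow_unbounded_of_one_lt (R := ℝ) (4 / δ) one_lt_two
  set m := max n m₀ with hm
  have h2m : (4:ℝ) / 2^m < δ := by
    have h1 : (2:ℝ)^m₀ ≤ 2^m := pow_le_pow_right₀ one_le_two (le_max_right _ _)
    rw [div_lt_iff₀ hδ] at hm₀
    rw [div_lt_iff₀ (by positivity : (0:ℝ) < 2^m)]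
    nlinarith
  obtain ⟨ε, hε, hεp⟩ := exists_eps κ (g p) m
  refine ⟨ε, hε, fun q hq hqε => ?_⟩
  have hiter : ∀ j ≤ m, ‖g (Fmod^[j] q) - g (Fmod^[j] p)‖ < 1/4 := by
    intro j hj
    rw [hconj_iter hconj hq j, hconj_iter hconj hp j]
    exact hεp (g q) hqε j hj
  have haddr : ∀ i ≤ m, ofLex q.1 i = ofLex p.1 i := by
    intro i hi
    have him : |(g (Fmod^[i] q)).im - (g (Fmod^[i] p)).im| < 1/2 := by
      have h1 : |(g (Fmod^[i] q) - g (Fmod^[i] p)).im| ≤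
          ‖g (Fmod^[i] q) - g (Fmod^[i] p)‖ := Complex.abs_im_le_norm _
      rw [Complex.sub_im] at h1
      linarith [hiter i hi]
    have := addr_eq_of_im_close hK hκ hg (Fmod_iterate_mem_Yset hq i)
      (Fmod_iterate_mem_Yset hp i) him
    rwa [fst_coord_iterate, fst_coord_iterate] at this
  refine ⟨fun i hi => haddr i (le_trans hi (le_max_left _ _)), ?_⟩
  have h1 := texpand hK hq hp haddr m le_rfl
  have h2 : |(Fmod^[m] q).2 - (Fmod^[m] p).2| ≤ 4 := by
    have e1 := g_est hK hκ hg (Fmod_iterate_mem_Yset hq m)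
    have e2 := g_est hK hκ hg (Fmod_iterate_mem_Yset hp m)
    have hre : |(g (Fmod^[m] q)).re - (g (Fmod^[m] p)).re| < 1/4 := by
      have h1' : |(g (Fmod^[m] q) - g (Fmod^[m] p)).re| ≤
          ‖g (Fmod^[m] q) - g (Fmod^[m] p)‖ := Complex.abs_re_le_norm _
      rw [Complex.sub_re] at h1'
      linarith [hiter m le_rfl]
    have := abs_le.mp hre.le
    rw [abs_le]
    constructor <;> [nlinarith [e1.1, e1.2.1, e2.1, e2.2.1]; nlinarith [e1.1, e1.2.1, e2.1, e2.2.1]]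
  have h3 : |q.2 - p.2| ≤ 4 / 2^m := by
    rw [le_div_iff₀ (by positivity : (0:ℝ) < 2^m)]
    nlinarith
  linarith

lemma g_embedding (hK : 2 * Real.pi + 6 < K) (hκ : ‖κ‖ ≤ K)
    (hg : TendstoUniformlyOn (gmap κ) g atTop (Yset (Qconst K)))
    (hconj : ∀ p ∈ Yset (Qconst K), g (Fmod p) = Eexp κ (g p)) :
    Topology.IsEmbedding ((Yset (Qconst K)).restrict g) := by
  constructor
  · rw [isInducing_iff_nhds]
    intro x
    apply le_antisymm
    · exact ((g_contOn hK hκ hg).restrict.tendsto x).le_comap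
    · intro U hU
      rw [nhds_subtype_eq_comap] at hU
      obtain ⟨W, hW, hWU⟩ := hU
      rw [nhds_prod_eq] at hW
      obtain ⟨A, hA, B, hB, hAB⟩ := Filter.mem_prod_iff.mp hW
      obtain ⟨n, hcylA⟩ := exists_cyl_subset hA
      obtain ⟨δ, hδ, hballB⟩ := Metric.mem_nhds_iff.mp hB
      obtain ⟨ε, hε, hsep⟩ := g_sep hK hκ hg hconj x.2 n hδ
      refine Filter.mem_comap.mpr ⟨Metric.ball (g ↑x) ε, Metric.ball_mem_nhds _ hε, ?_⟩
      intro y hy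
      have hyb : ‖g ↑y - g ↑x‖ < ε := by
        have : dist (g ↑y) (g ↑x) < ε := Metric.mem_ball.mp hy
        rwa [Complex.dist_eq] at this
      obtain ⟨hcoords, ht⟩ := hsep ↑y y.2 hyb
      apply hWU
      have : (↑y : Addr × ℝ) ∈ A ×ˢ B := by
        constructor
        · exact hcylA hcoords
        · apply hballB
          rw [Metric.mem_ball, Real.dist_eq]
          exact ht
      show (↑y : Addr × ℝ) ∈ W
      exact hAB this
  · exact Set.injOn_iff_injective.mp (g_injOn hK hκ hg hconj)

end Embed

end AuxLemmas

/-- **Properties of the limit map `𝔤`** (Theorem 4.2, second part): the uniform limit `𝔤`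
of the `𝔤_k` on `Y` is injective on `Y` and a homeomorphism of `Y` onto its image
(with `ℤ^ℕ` carrying the lexicographic order topology and the product topology on
`ℤ^ℕ × ℝ`); moreover `𝔤(s,t) ∈ I(E_κ)` iff `(s,t) ∈ X`, and `𝔤(s,t)` has external
address `s`. -/
theorem gmap_limit_embedding (κ : ℂ) (K : ℝ) (hK : 2 * Real.pi + 6 < K)
    (hκ : ‖κ‖ ≤ K) (g : Addr × ℝ → ℂ)
    (hg : TendstoUniformlyOn (gmap κ) g atTop (Yset (Qconst K)))
    (hconj : ∀ p ∈ Yset (Qconst K), g (Fmod p) = Eexp κ (g p)) :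
    Set.InjOn g (Yset (Qconst K)) ∧
    Topology.IsEmbedding ((Yset (Qconst K)).restrict g) ∧
    (∀ p ∈ Yset (Qconst K), (g p ∈ escapingSet κ ↔ p ∈ Xset)) ∧
    (∀ p ∈ Yset (Qconst K), ∀ n : ℕ, 1 ≤ n →
      ((Eexp κ)^[n - 1] (g p)).im ∈
        Set.Ioo ((2 * ((ofLex p.1 (n - 1) : ℤ) : ℝ) - 1) * Real.pi)
                ((2 * ((ofLex p.1 (n - 1) : ℤ) : ℝ) + 1) * Real.pi)) := by
  refine ⟨g_injOn hK hκ hg hconj, g_embedding hK hκ hg hconj,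
    fun p hp => g_escaping_iff hK hκ hg hconj hp, ?_⟩
  intro p hp n hn
  have hπ : 3.14 < Real.pi := by have := Real.pi_gt_d6; linarith
  have hiter : (Eexp κ)^[n-1] (g p) = g (Fmod^[n-1] p) := (hconj_iter hconj hp (n-1)).symm
  rw [hiter]
  have hest := (g_est hK hκ hg (Fmod_iterate_mem_Yset hp (n-1))).2.2
  rw [fst_coord_iterate] at hest
  obtain ⟨h1, h2⟩ := abs_le.mp hest
  constructor
  · nlinarith
  · nlinarith
end
end

section
/- Suppose z ∈ ℂ satisfies Re(E_κⁿ(z)) ≥ Q + 1 for all n ≥ 0. Then there exist an external address s and a real number t ≥ 0 such that (s,t) ∈ Y and 𝔤(s,t) = z; in particular z has external address s, i.e. Im(E_κ^{n−1}(z)) ∈ ((2s_n − 1)π, (2s_n + 1)π) for all n ≥ 1. -/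
open Filter Topology ENNReal

noncomputable section

namespace Aux44

/-- orbit of `z` under `E_κ` -/
def zsq (κ z : ℂ) (n : ℕ) : ℂ := (Eexp κ)^[n] z

/-- address entries -/
def mseq (κ z : ℂ) (n : ℕ) : ℤ := round ((zsq κ z n).im / (2 * Real.pi))

/-- forward model orbit of the potential -/
def Torb (m : ℕ → ℤ) : ℕ → ℝ → ℝ
  | 0, τ => τ
  | n+1, τ => Fexp (Torb m n τ) - 2 * Real.pi * |((m (n+1) : ℤ) : ℝ)|

/-- backward orbit started at `Re z_k` -/
def back (κ z : ℂ) (k : ℕ) : ℕ → ℝ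
  | 0 => (zsq κ z k).re
  | j+1 => Real.log (1 + back κ z k j + 2 * Real.pi * |((mseq κ z (k-j) : ℤ) : ℝ)|)

lemma log_lip {c x y : ℝ} (hc : 0 < c) (hx : c ≤ x) (hy : c ≤ y) :
    |Real.log x - Real.log y| ≤ |x - y| / c := by
  wlog h : y ≤ x generalizing x y
  · rw [abs_sub_comm, abs_sub_comm x y]; exact this hy hx (le_of_not_ge h)
  have hy0 : 0 < y := hc.trans_le hy
  have hx0 : 0 < x := hc.trans_le hx
  have hxy : 0 ≤ x - y := sub_nonneg.2 h
  rw [abs_of_nonneg (sub_nonneg.2 (Real.log_le_log hy0 h)), abs_of_nonneg hxy]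
  have h1 : Real.log x - Real.log y = Real.log (x / y) := (Real.log_div hx0.ne' hy0.ne').symm
  have h2 : Real.log (x / y) ≤ x / y - 1 := Real.log_le_sub_one_of_pos (div_pos hx0 hy0)
  have h3 : x / y - 1 = (x - y) / y := by field_simp
  have h4 : (x - y) / y ≤ (x - y) / c := by gcongr
  linarith

lemma torb_cont (m : ℕ → ℤ) : ∀ n, Continuous (Torb m n)
  | 0 => continuous_id
  | n+1 => by
      show Continuous fun τ => Fexp (Torb m n τ) - 2 * Real.pi * |((m (n+1) : ℤ) : ℝ)|
      unfold Fexp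
      exact ((Real.continuous_exp.comp (torb_cont m n)).sub continuous_const).sub
        continuous_const

lemma fmod_iter (m : ℕ → ℤ) (τ : ℝ) :
    ∀ n, Fmod^[n] (toLex m, τ) = (toLex (fun i => m (i+n)), Torb m n τ)
  | 0 => by
      simp only [Function.iterate_zero_apply, Torb]
      exact congrArg (fun f => (toLex f, τ)) (funext fun i => by rw [Nat.add_zero]).symm
  | n+1 => by
      rw [Function.iterate_succ_apply', fmod_iter m τ n]
      unfold Fmod shiftA
      simp only [ofLex_toLex]
      refine Prod.ext ?_ ?_
      · exact congrArg toLex (funext fun i => congrArg m (by omega))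
      · show Fexp (Torb m n τ) - 2 * Real.pi * |((m (1+n) : ℤ) : ℝ)| = Torb m (n+1) τ
        simp only [Torb]
        rw [Nat.add_comm 1 n]

end Aux44

open Aux44

set_option maxHeartbeats 1000000

/-- **Points in the image of `𝔤`** (Theorem 4.4): if the whole orbit of `z` under `E_κ`
stays in the half-plane `{Re ≥ Q + 1}`, then `z = 𝔤(s,t)` for some `(s,t) ∈ Y`; in
particular `z` has external address `s`. -/
theorem points_in_image_of_gmap (κ : ℂ) (K : ℝ) (hK : 2 * Real.pi + 6 < K)
    (hκ : ‖κ‖ ≤ K) (g : Addr × ℝ → ℂ)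
    (hg : TendstoUniformlyOn (gmap κ) g atTop (Yset (Qconst K)))
    (hconj : ∀ p ∈ Yset (Qconst K), g (Fmod p) = Eexp κ (g p))
    (z : ℂ) (hz : ∀ n : ℕ, Qconst K + 1 ≤ ((Eexp κ)^[n] z).re) :
    ∃ (s : Addr) (t : ℝ), 0 ≤ t ∧ (s, t) ∈ Yset (Qconst K) ∧ g (s, t) = z ∧
      ∀ n : ℕ, 1 ≤ n →
        ((Eexp κ)^[n - 1] z).im ∈
          Set.Ioo ((2 * ((ofLex s (n - 1) : ℤ) : ℝ) - 1) * Real.pi)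
                  ((2 * ((ofLex s (n - 1) : ℤ) : ℝ) + 1) * Real.pi) := by
  have hπ : (3:ℝ) < Real.pi := Real.pi_gt_three
  have hπ4 : Real.pi ≤ 4 := Real.pi_le_four
  have hK0 : (0:ℝ) < K := by linarith
  have hQ2 : Real.pi + 2 ≤ Qconst K := le_max_right _ _
  have hQ1 : 4*(K+Real.pi+3) ≤ Real.exp (Qconst K) := by
    have h0 : (0:ℝ) < 4*(K+Real.pi+3) := by linarith
    calc 4*(K+Real.pi+3) = Real.exp (Real.log (4*(K+Real.pi+3))) := (Real.exp_log h0).symm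
    _ ≤ _ := Real.exp_le_exp.2 (le_max_left _ _)
  have he1 : (2.5:ℝ) ≤ Real.exp 1 := by
    have := Real.exp_one_gt_d9; norm_num at this ⊢; linarith
  have hz' : ∀ n, Qconst K + 1 ≤ (zsq κ z n).re := hz
  have hzsucc : ∀ n, zsq κ z (n+1) = Complex.exp (zsq κ z n) + κ := by
    intro n; rw [zsq, Function.iterate_succ_apply']; rfl
  have habs' : ∀ n, ‖zsq κ z (n+1) - κ‖ = Real.exp ((zsq κ z n).re) := by
    intro n
    rw [hzsucc n, add_sub_cancel_right, Complex.norm_exp]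
  have hEQ : ∀ n, Real.exp (Qconst K) * Real.exp 1 ≤ Real.exp ((zsq κ z n).re) := by
    intro n
    rw [← Real.exp_add]
    exact Real.exp_le_exp.2 (hz' n)
  have hDbig : ∀ n, 2.5 * (4*(K+Real.pi+3)) ≤ ‖zsq κ z (n+1) - κ‖ := by
    intro n
    rw [habs' n]
    calc 2.5 * (4*(K+Real.pi+3)) ≤ Real.exp (Qconst K) * Real.exp 1 := by
          rw [mul_comm]
          apply mul_le_mul hQ1 he1 (by norm_num) (Real.exp_pos _).le
    _ ≤ _ := hEQ n
  have hround : ∀ n, |(zsq κ z n).im - 2*Real.pi*((mseq κ z n : ℤ) : ℝ)| ≤ Real.pi := by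
    intro n
    have h1 := abs_sub_round ((zsq κ z n).im / (2 * Real.pi))
    have h2π : (0:ℝ) < 2*Real.pi := by linarith
    have : (zsq κ z n).im - 2*Real.pi*((mseq κ z n : ℤ) : ℝ)
        = (2*Real.pi) * ((zsq κ z n).im / (2 * Real.pi) - ((mseq κ z n : ℤ) : ℝ)) := by
      field_simp
    rw [this, abs_mul, abs_of_pos h2π]
    rw [mseq] at *
    calc 2*Real.pi * |(zsq κ z n).im / (2 * Real.pi) - ((round ((zsq κ z n).im / (2 * Real.pi)) : ℤ) : ℝ)|
        ≤ 2*Real.pi * (1/2) := by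
          apply mul_le_mul_of_nonneg_left h1 h2π.le
    _ = Real.pi := by ring
  have hcos : ∀ n, -(1:ℝ)/10 ≤ Real.cos ((zsq κ z n).im) := by
    intro n
    have hre : (zsq κ z (n+1)).re
        = Real.exp ((zsq κ z n).re) * Real.cos ((zsq κ z n).im) + κ.re := by
      rw [hzsucc n, Complex.add_re, Complex.exp_re]
    have hκre : -K ≤ κ.re := by
      have h1 : |κ.re| ≤ ‖κ‖ := Complex.abs_re_le_norm κ
      have h2 := abs_le.1 (h1.trans hκ); linarith [h2.1]
    have hκre2 : κ.re ≤ K := by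
      have h1 : |κ.re| ≤ ‖κ‖ := Complex.abs_re_le_norm κ
      have h2 := abs_le.1 (h1.trans hκ); linarith [h2.1, h2.2]
    have hKe : 10*K ≤ Real.exp ((zsq κ z n).re) := by
      have h3 := hDbig n; rw [habs' n] at h3; linarith
    have h2 : -K ≤ Real.exp ((zsq κ z n).re) * Real.cos ((zsq κ z n).im) := by
      have h4 := hz' (n+1); rw [hre] at h4
      linarith [hQ2, hπ]
    have hep := Real.exp_pos ((zsq κ z n).re)
    nlinarith
  have hθ : ∀ n, |(zsq κ z n).im - 2*Real.pi*((mseq κ z n : ℤ) : ℝ)| ≤ Real.pi - 1/2 := by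
    intro n
    by_contra h'
    push_neg at h'
    set θ : ℝ := (zsq κ z n).im - 2*Real.pi*((mseq κ z n : ℤ) : ℝ) with hθdef
    have hcosθ : Real.cos θ = Real.cos ((zsq κ z n).im) := by
      have hrw : θ = (zsq κ z n).im - ((mseq κ z n : ℤ) : ℝ)*(2*Real.pi) := by
        rw [hθdef]; ring
      rw [hrw, Real.cos_sub_int_mul_two_pi]
    have h1 : Real.cos |θ| ≤ Real.cos (Real.pi - 1/2) :=
      Real.cos_le_cos_of_nonneg_of_le_pi (by linarith) (hround n) h'.le
    have h2 : Real.cos (Real.pi - 1/2) = -Real.cos (1/2) := Real.cos_pi_sub (1/2)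
    have h4 : (7:ℝ)/8 ≤ Real.cos (1/2) := by
      have h5 := Real.one_sub_sq_div_two_le_cos (x := 1/2)
      norm_num at h5 ⊢; linarith
    rw [Real.cos_abs, hcosθ] at h1
    have := hcos n
    linarith
  have him : ∀ n, (zsq κ z n - 2*Real.pi*Complex.I*((mseq κ z n : ℤ) : ℂ)).im
      = (zsq κ z n).im - 2*Real.pi*((mseq κ z n : ℤ) : ℝ) := by
    intro n; simp
  have hlog : ∀ n, Complex.log (zsq κ z (n+1) - κ)
      = zsq κ z n - 2*Real.pi*Complex.I*((mseq κ z n : ℤ) : ℂ) := by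
    intro n
    have hsub : zsq κ z (n+1) - κ = Complex.exp (zsq κ z n) := by
      rw [hzsucc n]; ring
    have hexp : Complex.exp (zsq κ z n)
        = Complex.exp (zsq κ z n - 2*Real.pi*Complex.I*((mseq κ z n : ℤ) : ℂ)) := by
      rw [sub_eq_add_neg, Complex.exp_add,
        show -(2*(Real.pi:ℂ)*Complex.I*((mseq κ z n : ℤ) : ℂ))
            = ((-(mseq κ z n) : ℤ) : ℂ) * (2*(Real.pi:ℂ)*Complex.I) by push_cast; ring,
        Complex.exp_int_mul_two_pi_mul_I, mul_one]
    have hb := hθ n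
    rw [hsub, hexp, Complex.log_exp]
    · rw [him n]; linarith [(abs_le.1 hb).1]
    · rw [him n]; linarith [(abs_le.1 hb).2]
  have harg : ∀ n, |(zsq κ z (n+1) - κ).arg| ≤ Real.pi - 1/2 := by
    intro n
    have h1 : (zsq κ z (n+1) - κ).arg = (Complex.log (zsq κ z (n+1) - κ)).im :=
      (Complex.log_im _).symm
    rw [h1, hlog n, him n]
    exact hθ n
  have hback1 : ∀ k j, j ≤ k → |back κ z k j - (zsq κ z (k-j)).re| ≤ 1 := by
    intro k j hj
    induction j with
    | zero => simp [back]
    | succ j ih =>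
      have hj' : j ≤ k := by omega
      have ihj := ih hj'
      have hn1 : k - j = (k - (j+1)) + 1 := by omega
      set n : ℕ := k - (j+1) with hn
      rw [hn1] at ihj
      set u : ℝ := back κ z k j with hu
      set M : ℝ := 2 * Real.pi * |((mseq κ z (n+1) : ℤ) : ℝ)| with hM
      have hbs : back κ z k (j+1) = Real.log (1 + u + M) := by
        simp only [back]
        rw [hn1]
      clear_value u M
      set ζ : ℂ := zsq κ z (n+1) with hζ
      set D : ℝ := ‖ζ - κ‖ with hD
      have hDe : D = Real.exp ((zsq κ z n).re) := habs' n
      have hRe : (zsq κ z n).re = Real.log D := by rw [hDe, Real.log_exp]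
      have hD1 : 2.5*(4*(K+Real.pi+3)) ≤ D := hDbig n
      have hreζ : Qconst K + 1 ≤ ζ.re := hz' (n+1)
      clear_value ζ D
      have hre0 : 0 < ζ.re := by linarith
      have h_re_abs : ζ.re ≤ ‖ζ‖ := le_trans (le_abs_self _) (Complex.abs_re_le_norm ζ)
      have h_im_abs : |ζ.im| ≤ ‖ζ‖ := Complex.abs_im_le_norm ζ
      have h_abs_le : ‖ζ‖ ≤ ζ.re + |ζ.im| := by
        have h1 := Complex.norm_le_abs_re_add_abs_im ζ
        rw [abs_of_pos hre0] at h1; exact h1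
      have hζD1 : ‖ζ‖ ≤ D + K := by
        rw [hD]
        calc ‖ζ‖ = ‖(ζ - κ) + κ‖ := by rw [sub_add_cancel]
        _ ≤ ‖ζ - κ‖ + ‖κ‖ := norm_add_le _ _
        _ ≤ ‖ζ - κ‖ + K := by linarith
      have hζD2 : D ≤ ‖ζ‖ + K := by
        have h1 : ‖ζ - κ‖ ≤ ‖ζ‖ + ‖κ‖ :=
          norm_sub_le ζ κ
        rw [hD]; linarith
      have hMim : |(|ζ.im| - M)| ≤ Real.pi := by
        rw [hζ]
        have h1 : |2*Real.pi*((mseq κ z (n+1) : ℤ) : ℝ)| = M := by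
          rw [hM, abs_mul, abs_of_pos (by linarith : (0:ℝ) < 2*Real.pi)]
        have h2 := abs_abs_sub_abs_le_abs_sub (zsq κ z (n+1)).im
          (2*Real.pi*((mseq κ z (n+1) : ℤ) : ℝ))
        rw [h1] at h2
        exact h2.trans (hround (n+1))
      have hM0 : 0 ≤ M := by rw [hM]; positivity
      have hub := abs_le.1 ihj
      have hMb := abs_le.1 hMim
      set N : ℝ := 1 + u + M with hN
      clear_value N
      have hNlow : ‖ζ‖ - Real.pi ≤ N := by
        rw [hN]; linarith [hub.1, hMb.2]
      have hN34 : 0.75*D ≤ N := by linarith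
      have hDpos : (0:ℝ) < D := by linarith
      have hNpos : (0:ℝ) < N := by linarith
      have hNup : N ≤ 2.5*D := by
        rw [hN]; linarith [hub.2, hMb.1]
      have hup : Real.log N ≤ 1 + Real.log D := by
        have h1 : N ≤ Real.exp 1 * D := by
          have h2 : 2.5*D ≤ Real.exp 1 * D := mul_le_mul_of_nonneg_right he1 hDpos.le
          linarith
        calc Real.log N ≤ Real.log (Real.exp 1 * D) := Real.log_le_log hNpos h1
        _ = 1 + Real.log D := by
            rw [Real.log_mul (Real.exp_ne_zero 1) hDpos.ne', Real.log_exp]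
      have hdown : Real.log D ≤ 1 + Real.log N := by
        have h1 : D ≤ Real.exp 1 * N := by
          have h2 : 2.5*N ≤ Real.exp 1 * N := mul_le_mul_of_nonneg_right he1 hNpos.le
          linarith
        calc Real.log D ≤ Real.log (Real.exp 1 * N) := Real.log_le_log hDpos h1
        _ = 1 + Real.log N := by
            rw [Real.log_mul (Real.exp_ne_zero 1) hNpos.ne', Real.log_exp]
      rw [hbs, hRe, abs_le]
      constructor <;> linarith
  have hbackQ : ∀ k j, j ≤ k → Qconst K ≤ back κ z k j := by
    intro k j hj
    have h1 := abs_le.1 (hback1 k j hj)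
    have h2 := hz' (k-j)
    linarith [h1.1]
  have hcontr : ∀ k j, j ≤ k → |back κ z (k+1) (j+1) - back κ z k j| ≤ (1/2:ℝ)^j := by
    intro k j hj
    induction j with
    | zero =>
      have h1 := hback1 (k+1) 1 (by omega)
      have h2 : k + 1 - 1 = k := by omega
      rw [h2] at h1
      simpa [back] using h1
    | succ j ih =>
      have hj' : j ≤ k := by omega
      have ihj := ih hj'
      have hidx : (k+1) - (j+1) = k - j := by omega
      have e1 : back κ z (k+1) (j+2)
          = Real.log (1 + back κ z (k+1) (j+1) + 2*Real.pi*|((mseq κ z (k-j) : ℤ) : ℝ)|) := by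
        simp only [back]
        rw [hidx]
      have e2 : back κ z k (j+1)
          = Real.log (1 + back κ z k j + 2*Real.pi*|((mseq κ z (k-j) : ℤ) : ℝ)|) := by
        simp only [back]
      have hM0 : (0:ℝ) ≤ 2*Real.pi*|((mseq κ z (k-j) : ℤ) : ℝ)| := by positivity
      have ha : Qconst K ≤ back κ z (k+1) (j+1) := hbackQ (k+1) (j+1) (by omega)
      have hb : Qconst K ≤ back κ z k j := hbackQ k j hj'
      have hlip := log_lip (c := 2) two_pos
        (x := 1 + back κ z (k+1) (j+1) + 2*Real.pi*|((mseq κ z (k-j) : ℤ) : ℝ)|)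
        (y := 1 + back κ z k j + 2*Real.pi*|((mseq κ z (k-j) : ℤ) : ℝ)|)
        (by linarith) (by linarith)
      have hsub : (1 + back κ z (k+1) (j+1) + 2*Real.pi*|((mseq κ z (k-j) : ℤ) : ℝ)|)
          - (1 + back κ z k j + 2*Real.pi*|((mseq κ z (k-j) : ℤ) : ℝ)|)
          = back κ z (k+1) (j+1) - back κ z k j := by ring
      rw [hsub] at hlip
      rw [e1, e2]
      calc |Real.log (1 + back κ z (k+1) (j+1) + 2*Real.pi*|((mseq κ z (k-j) : ℤ) : ℝ)|)
            - Real.log (1 + back κ z k j + 2*Real.pi*|((mseq κ z (k-j) : ℤ) : ℝ)|)|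
          ≤ |back κ z (k+1) (j+1) - back κ z k j| / 2 := hlip
      _ ≤ ((1/2:ℝ)^j) / 2 := by linarith
      _ = (1/2:ℝ)^(j+1) := by ring
  have hcauchy : CauchySeq (fun k => back κ z k k) := by
    apply cauchySeq_of_le_geometric (1/2 : ℝ) 1 (by norm_num)
    intro k
    rw [Real.dist_eq]
    have h1 := hcontr k k le_rfl
    rw [abs_sub_comm] at h1
    calc |back κ z k k - back κ z (k+1) (k+1)| ≤ (1/2:ℝ)^k := h1
    _ = 1 * (1/2:ℝ)^k := (one_mul _).symm
  obtain ⟨t, ht⟩ := cauchySeq_tendsto_of_complete hcauchy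
  have htb : ∀ k n, n ≤ k → Torb (mseq κ z) n (back κ z k k) = back κ z k (k-n) := by
    intro k n
    induction n with
    | zero => intro _; simp [Torb]
    | succ n ih =>
      intro hnk
      have hn' : n ≤ k := by omega
      show Fexp (Torb (mseq κ z) n (back κ z k k))
          - 2*Real.pi*|((mseq κ z (n+1) : ℤ) : ℝ)| = back κ z k (k-(n+1))
      rw [ih hn']
      have h1 : k - n = (k - (n+1)) + 1 := by omega
      have h2 : k - (k - (n+1)) = n + 1 := by omega
      rw [h1]
      simp only [back]
      rw [h2]
      have hM0 : (0:ℝ) ≤ 2*Real.pi*|((mseq κ z (n+1) : ℤ) : ℝ)| := by positivity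
      have hbq := hbackQ k (k-(n+1)) (by omega)
      have hpos : (0:ℝ) < 1 + back κ z k (k-(n+1)) + 2*Real.pi*|((mseq κ z (n+1) : ℤ) : ℝ)| := by
        linarith
      unfold Fexp
      rw [Real.exp_log hpos]
      ring
  have hTclose : ∀ n, |Torb (mseq κ z) n t - (zsq κ z n).re| ≤ 1 := by
    intro n
    have hc : Tendsto (fun k => Torb (mseq κ z) n (back κ z k k)) atTop
        (𝓝 (Torb (mseq κ z) n t)) := ((torb_cont (mseq κ z) n).tendsto t).comp ht
    have habs : Tendsto (fun k => |Torb (mseq κ z) n (back κ z k k) - (zsq κ z n).re|) atTop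
        (𝓝 |Torb (mseq κ z) n t - (zsq κ z n).re|) := (hc.sub_const _).abs
    apply le_of_tendsto habs
    filter_upwards [eventually_ge_atTop n] with k hk
    rw [htb k n hk]
    have h1 := hback1 k (k-n) (by omega)
    rw [show k - (k-n) = n by omega] at h1
    exact h1
  have hTQ : ∀ n, Qconst K ≤ Torb (mseq κ z) n t := by
    intro n
    have h1 := abs_le.1 (hTclose n)
    have h2 := hz' n
    linarith [h1.1]
  have hiter := fmod_iter (mseq κ z) t
  have hY : (toLex (mseq κ z), t) ∈ Yset (Qconst K) := by
    have hQ0 : (0:ℝ) ≤ Qconst K := by linarith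
    refine ⟨fun n => ?_, fun n => ?_⟩
    · rw [hiter n]; exact le_trans hQ0 (hTQ n)
    · rw [hiter n]; exact hTQ n
  have ht0 : 0 ≤ t := by
    have h1 := hTQ 0
    simp only [Torb] at h1
    linarith
  have hgb : ∀ k j, j ≤ k →
      ‖gmap κ j (Fmod^[k-j] (toLex (mseq κ z), t)) - zsq κ z (k-j)‖
        ≤ (Real.pi+1) * (1/2:ℝ)^j := by
    intro k j hj
    induction j with
    | zero =>
      rw [Nat.sub_zero, pow_zero, mul_one]
      rw [hiter k]
      have hre : (gmap κ 0 (toLex (fun i => mseq κ z (i+k)), Torb (mseq κ z) k t)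
          - zsq κ z k).re = Torb (mseq κ z) k t - (zsq κ z k).re := by
        simp [gmap, Zc]
      have him2 : (gmap κ 0 (toLex (fun i => mseq κ z (i+k)), Torb (mseq κ z) k t)
          - zsq κ z k).im = 2*Real.pi*((mseq κ z k : ℤ) : ℝ) - (zsq κ z k).im := by
        simp [gmap, Zc]
      refine le_trans (Complex.norm_le_abs_re_add_abs_im _) ?_
      rw [hre, him2]
      have h1 := hTclose k
      have h2 := hround k
      rw [abs_sub_comm] at h2
      linarith
    | succ j ih =>
      have hj' : j ≤ k := by omega
      have ihj := ih hj'
      have hn1 : k - j = (k - (j+1)) + 1 := by omega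
      set n : ℕ := k - (j+1) with hn
      rw [hn1] at ihj
      set w : ℂ := gmap κ j (Fmod^[n+1] (toLex (mseq κ z), t)) with hw
      have hgs : gmap κ (j+1) (Fmod^[n] (toLex (mseq κ z), t))
          = Complex.log (w - κ) + 2*(Real.pi:ℂ)*Complex.I*((mseq κ z n : ℤ) : ℂ) := by
        simp only [gmap]
        rw [← Function.iterate_succ_apply' Fmod n, ← hw, hiter n]
        simp
      clear_value w
      set b : ℂ := zsq κ z (n+1) - κ with hb
      have hbabs : ‖b‖ = Real.exp ((zsq κ z n).re) := habs' n
      have hbbig : 2.5*(4*(K+Real.pi+3)) ≤ ‖b‖ := hDbig n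
      have hlb : Complex.log b = zsq κ z n - 2*(Real.pi:ℂ)*Complex.I*((mseq κ z n : ℤ) : ℂ) :=
        hlog n
      have hargb : |b.arg| ≤ Real.pi - 1/2 := harg n
      clear_value b
      have hbpos : 0 < ‖b‖ := by nlinarith
      have hbne : b ≠ 0 := by
        intro h; rw [h] at hbpos; simp at hbpos
      set u : ℂ := (w - zsq κ z (n+1)) / b with hu
      have hwk : w - κ = b * (1 + u) := by
        rw [hu, mul_add, mul_one, mul_div_cancel₀ _ hbne, hb]; ring
      have hub : ‖u‖ * ‖b‖ ≤ (Real.pi+1) * (1/2:ℝ)^j := by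
        rw [hu, norm_div, div_mul_cancel₀ _ hbpos.ne']
        exact ihj
      clear_value u
      have hpow1 : ((1:ℝ)/2)^j ≤ 1 := by
        apply pow_le_one₀ <;> norm_num
      have hX0 : (0:ℝ) ≤ (Real.pi+1) * (1/2:ℝ)^j := by positivity
      have hXπ : (Real.pi+1) * (1/2:ℝ)^j ≤ Real.pi + 1 := by nlinarith
      have h10 : 10*(Real.pi+1) ≤ ‖b‖ := by nlinarith
      have habsu : ‖u‖ ≤ 1/10 := by nlinarith [norm_nonneg u]
      have h1u : ‖Complex.log (1+u)‖ ≤ (3/2) * ‖u‖ := by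
        apply Complex.norm_log_one_add_half_le_self
        linarith
      have h1une : (1+u : ℂ) ≠ 0 := by
        intro h
        have h2 : u = -1 := by linear_combination h
        rw [h2] at habsu
        simp at habsu
        linarith
      have hargu : |(1+u : ℂ).arg| ≤ 3/20 := by
        rw [← Complex.log_im]
        refine le_trans (Complex.abs_im_le_norm _) ?_
        linarith
      have hlogmul : Complex.log (b*(1+u)) = Complex.log b + Complex.log (1+u) := by
        apply (Complex.log_mul_eq_add_log_iff hbne h1une).2
        have ha1 := abs_le.1 hargb
        have ha2 := abs_le.1 hargu
        constructor
        · nlinarith [ha1.1, ha2.1, hπ]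
        · nlinarith [ha1.2, ha2.2, hπ]
      have hkey : gmap κ (j+1) (Fmod^[n] (toLex (mseq κ z), t)) - zsq κ z n
          = Complex.log (1+u) := by
        rw [hgs, hwk, hlogmul, hlb]; ring
      rw [hkey]
      have h3b : (3:ℝ) ≤ ‖b‖ := by linarith
      calc ‖Complex.log (1+u)‖ ≤ (3/2) * ‖u‖ := h1u
      _ ≤ ((Real.pi+1) * (1/2:ℝ)^j) / 2 := by
          nlinarith [hub, mul_nonneg (norm_nonneg u)
            (by linarith : (0:ℝ) ≤ ‖b‖ - 3)]
      _ = (Real.pi+1) * (1/2:ℝ)^(j+1) := by rw [pow_succ]; ring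
  have hgz : Tendsto (fun k => gmap κ k (toLex (mseq κ z), t)) atTop (𝓝 z) := by
    rw [tendsto_iff_dist_tendsto_zero]
    have hle : ∀ k : ℕ, dist (gmap κ k (toLex (mseq κ z), t)) z ≤ (Real.pi+1) * (1/2:ℝ)^k := by
      intro k
      have h1 := hgb k k le_rfl
      rw [Nat.sub_self] at h1
      rw [Complex.dist_eq]
      simpa [zsq] using h1
    have hg0 : Tendsto (fun k : ℕ => (Real.pi+1) * (1/2:ℝ)^k) atTop (𝓝 0) := by
      have h2 : Tendsto (fun k : ℕ => ((1:ℝ)/2)^k) atTop (𝓝 0) :=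
        tendsto_pow_atTop_nhds_zero_of_lt_one (by norm_num) (by norm_num)
      simpa using h2.const_mul (Real.pi+1)
    exact squeeze_zero (fun k => dist_nonneg) hle hg0
  have hgp : g (toLex (mseq κ z), t) = z := tendsto_nhds_unique (hg.tendsto_at hY) hgz
  refine ⟨toLex (mseq κ z), t, ht0, hY, hgp, ?_⟩
  intro n hn
  have h1 := hθ (n-1)
  simp only [zsq] at h1
  have h2 := abs_le.1 h1
  have hofLex : (ofLex (toLex (mseq κ z)) (n-1)) = mseq κ z (n-1) := rfl
  rw [Set.mem_Ioo, hofLex]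
  constructor
  · nlinarith [h2.1, hπ]
  · nlinarith [h2.2, hπ]
end
end

section
/- Let s be a fast external address. Define b := limsup_{n→∞} F^{−(n−1)}(2π|s_n|) and t_n := T(𝓕^{n−1}(s, t_s)) for n ≥ 1, where F^{−1}(t) = log(1+t) is the inverse of F and F^{−k} its k-th iterate. Then for every K > 0 the following are equivalent: (1) there exist C₁ > 0 and n₀ ∈ ℕ such that 2π|s_n| < C₁·t_nᴷ for all n ≥ n₀; (2) there exist C₂ > 0 and n₀ ∈ ℕ such that 2π|s_n| < C₂·(F^{n−1}(b))ᴷ for all n ≥ n₀. -/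
open Filter Topology ENNReal

noncomputable section

/-- The inverse `F⁻¹(t) = log(1+t)` of the model growth function. -/
def Finv (t : ℝ) : ℝ := Real.log (1 + t)

/-- The minimal potential `b = limsup_{n→∞} F^{-(n-1)}(2π |s_n|)`; with 0-based indexing,
the paper's `s_n` is `ofLex s (n-1)`, so we take the limsup over `m = n - 1`. -/
def minPot (s : Addr) : ℝ :=
  Filter.limsup (fun m : ℕ => Finv^[m] (2 * Real.pi * |((ofLex s m : ℤ) : ℝ)|)) atTop

namespace ParabAux

lemma fexp_mono : Monotone Fexp := fun x y h => sub_le_sub_right (Real.exp_le_exp.2 h) 1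

lemma fexp_strictMono : StrictMono Fexp := fun x y h => sub_lt_sub_right (Real.exp_lt_exp.2 h) 1

lemma fexp_zero : Fexp 0 = 0 := by simp [Fexp]

lemma le_fexp (t : ℝ) : t ≤ Fexp t := by
  have := Real.add_one_le_exp t; simp only [Fexp]; linarith

lemma fexp_nonneg {t : ℝ} (h : 0 ≤ t) : 0 ≤ Fexp t := h.trans (le_fexp t)

lemma finv_fexp (t : ℝ) : Finv (Fexp t) = t := by
  rw [Finv, Fexp, show (1:ℝ) + (Real.exp t - 1) = Real.exp t by ring, Real.log_exp]

lemma fexp_finv {x : ℝ} (h : 0 ≤ x) : Fexp (Finv x) = x := by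
  rw [Finv, Fexp, Real.exp_log (by linarith)]; ring

lemma finv_nonneg {x : ℝ} (h : 0 ≤ x) : 0 ≤ Finv x := Real.log_nonneg (by linarith)

lemma finv_mono {x y : ℝ} (hx : 0 ≤ x) (h : x ≤ y) : Finv x ≤ Finv y :=
  Real.log_le_log (by linarith) (by linarith)

lemma finv_lt_finv {x y : ℝ} (hx : 0 ≤ x) (h : x < y) : Finv x < Finv y :=
  Real.log_lt_log (by linarith) (by linarith)

lemma finv_iter_nonneg (n : ℕ) {x : ℝ} (h : 0 ≤ x) : 0 ≤ Finv^[n] x := by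
  induction n with
  | zero => simpa
  | succ n ih => rw [Function.iterate_succ_apply']; exact finv_nonneg ih

lemma finv_iter_mono (n : ℕ) {x y : ℝ} (hx : 0 ≤ x) (h : x ≤ y) : Finv^[n] x ≤ Finv^[n] y := by
  induction n with
  | zero => simpa
  | succ n ih =>
    rw [Function.iterate_succ_apply', Function.iterate_succ_apply']
    exact finv_mono (finv_iter_nonneg n hx) ih

lemma fexp_iter_mono (n : ℕ) : Monotone (Fexp^[n]) := fexp_mono.iterate n

lemma fexp_iter_strictMono (n : ℕ) : StrictMono (Fexp^[n]) := fexp_strictMono.iterate n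

lemma fexp_iter_nonneg (n : ℕ) {x : ℝ} (h : 0 ≤ x) : 0 ≤ Fexp^[n] x := by
  induction n with
  | zero => simpa
  | succ n ih => rw [Function.iterate_succ_apply']; exact fexp_nonneg ih

lemma fexp_iter_zero (n : ℕ) : Fexp^[n] 0 = 0 := Function.iterate_fixed fexp_zero n

lemma fexp_iter_finv_iter (n : ℕ) {x : ℝ} (h : 0 ≤ x) : Fexp^[n] (Finv^[n] x) = x := by
  induction n generalizing x with
  | zero => simp
  | succ n ih =>
    rw [Function.iterate_succ_apply' Fexp, Function.iterate_succ_apply Finv,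
      ih (finv_nonneg h), fexp_finv h]

lemma finv_add_le {x y : ℝ} (hx : 0 ≤ x) (hy : 0 ≤ y) : Finv (x + y) ≤ Finv x + Finv y := by
  rw [Finv, Finv, Finv, ← Real.log_mul (by linarith) (by linarith)]
  exact Real.log_le_log (by linarith) (by nlinarith)

lemma finv_mul_le {L x : ℝ} (hL : 1 ≤ L) (hx : 0 ≤ x) : Finv (L * x) ≤ Real.log L + Finv x := by
  rw [Finv, Finv, ← Real.log_mul (by linarith) (by linarith)]
  exact Real.log_le_log (by nlinarith) (by nlinarith)

lemma fexp_two_mul (x : ℝ) : Fexp (2 * x) = Fexp x * (Fexp x + 2) := by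
  rw [Fexp, Fexp, two_mul, Real.exp_add]; ring

lemma fexp_quad {t : ℝ} (h : 0 ≤ t) : t + t ^ 2 / 4 ≤ Fexp t := by
  have h1 := Real.add_one_le_exp (t / 2)
  have h2 : Real.exp t = Real.exp (t / 2) * Real.exp (t / 2) := by
    rw [← Real.exp_add]; ring_nf
  rw [Fexp, h2]; nlinarith [Real.exp_pos (t / 2)]

lemma tendsto_fexp_iter {b : ℝ} (hb : 0 < b) :
    Tendsto (fun n : ℕ => Fexp^[n] b) atTop atTop := by
  have hge : ∀ n : ℕ, b ≤ Fexp^[n] b := by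
    intro n
    induction n with
    | zero => simp
    | succ n ih =>
      rw [Function.iterate_succ_apply']
      exact ih.trans (le_fexp _)
  have hlin : ∀ n : ℕ, b + n * (b ^ 2 / 4) ≤ Fexp^[n] b := by
    intro n
    induction n with
    | zero => simp
    | succ n ih =>
      rw [Function.iterate_succ_apply']
      have h1 : Fexp^[n] b + (Fexp^[n] b) ^ 2 / 4 ≤ Fexp (Fexp^[n] b) :=
        fexp_quad (hb.le.trans (hge n))
      have h2 : b ^ 2 / 4 ≤ (Fexp^[n] b) ^ 2 / 4 := by
        have := hge n; nlinarith
      push_cast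
      linarith
  refine tendsto_atTop_mono hlin ?_
  exact tendsto_atTop_add_const_left _ b
    (Tendsto.atTop_mul_const (by positivity) tendsto_natCast_atTop_atTop)

lemma fexp_sub_ge {x y : ℝ} (hy : 0 ≤ y) (h : y ≤ x) : x - y ≤ Fexp x - Fexp y := by
  have h1 : Real.exp x = Real.exp y * Real.exp (x - y) := by rw [← Real.exp_add]; ring_nf
  have h2 := Real.add_one_le_exp (x - y)
  have h3 : (1:ℝ) ≤ Real.exp y := by
    rw [show (1:ℝ) = Real.exp 0 by simp]; exact Real.exp_le_exp.2 hy
  simp only [Fexp]; nlinarith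

lemma eventually_ratio {b c : ℝ} (hb : 0 < b) (hbc : b < c) :
    ∀ᶠ n : ℕ in atTop, 2 * Fexp^[n] b + 1 ≤ Fexp^[n] c := by
  set d : ℕ → ℝ := fun n => Fexp^[n] c - Fexp^[n] b with hd_def
  have hble : ∀ n, Fexp^[n] b ≤ Fexp^[n] c := fun n => fexp_iter_mono n hbc.le
  have hbnn : ∀ n, 0 ≤ Fexp^[n] b := fun n => fexp_iter_nonneg n hb.le
  have hdmono : Monotone d := by
    refine monotone_nat_of_le_succ fun n => ?_
    have := fexp_sub_ge (hbnn n) (hble n)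
    simp only [hd_def, Function.iterate_succ_apply']
    linarith
  have hd0 : 0 < d 0 := by simp [hd_def]; linarith
  -- once Fexp^[n] b ≥ 1, d grows by factor ≥ 2
  obtain ⟨n₁, hn₁⟩ := eventually_atTop.1 ((tendsto_fexp_iter hb).eventually_ge_atTop 1)
  have hgrow : ∀ k : ℕ, (2:ℝ) ^ k * d n₁ ≤ d (n₁ + k) := by
    intro k
    induction k with
    | zero => simp
    | succ k ih =>
      have h1 : 1 ≤ Fexp^[n₁ + k] b := hn₁ _ (by omega)
      have h2 : Real.exp (Fexp^[n₁+k] c) = Real.exp (Fexp^[n₁+k] b) * Real.exp (d (n₁+k)) := by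
        rw [← Real.exp_add]; simp [hd_def]
      have h3 := Real.add_one_le_exp (d (n₁ + k))
      have h4 : Real.exp 1 ≤ Real.exp (Fexp^[n₁+k] b) := Real.exp_le_exp.2 h1
      have h5 : (2:ℝ) ≤ Real.exp 1 := by
        have := Real.exp_one_gt_d9; linarith
      have h6 : 0 ≤ d (n₁ + k) := by
        have := hble (n₁ + k); simp [hd_def]; linarith
      have key : 2 * d (n₁ + k) ≤ d (n₁ + k + 1) := by
        have : d (n₁ + k + 1) = Real.exp (Fexp^[n₁+k] c) - Real.exp (Fexp^[n₁+k] b) := by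
          simp [hd_def, Function.iterate_succ_apply', Fexp]
        rw [this, h2]
        nlinarith [Real.exp_pos (Fexp^[n₁+k] b)]
      have h7 : (0:ℝ) < 2 ^ k := by positivity
      calc (2:ℝ) ^ (k+1) * d n₁ = 2 * (2 ^ k * d n₁) := by ring
      _ ≤ 2 * d (n₁ + k) := by nlinarith [hdmono (show n₁ ≤ n₁ + k by omega)]
      _ ≤ d (n₁ + k + 1) := key
      _ = d (n₁ + (k+1)) := by ring_nf
  -- find n₂ with d n₂ ≥ log 2
  have hd1pos : 0 < d n₁ := hd0.trans_le (hdmono (Nat.zero_le _))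
  obtain ⟨k₀, hk₀⟩ := pow_unbounded_of_one_lt (Real.log 2 / d n₁) (by norm_num : (1:ℝ) < 2)
  have hlog2 : Real.log 2 ≤ d (n₁ + k₀) := by
    have := hgrow k₀
    have h8 : Real.log 2 ≤ 2 ^ k₀ * d n₁ := by
      rw [div_lt_iff₀ hd1pos] at hk₀; linarith
    linarith
  -- conclude for n ≥ n₁ + k₀ + 1
  refine eventually_atTop.2 ⟨n₁ + k₀ + 1, fun n hn => ?_⟩
  obtain ⟨m, rfl⟩ : ∃ m, n = m + 1 := ⟨n - 1, by omega⟩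
  have hm : n₁ + k₀ ≤ m := by omega
  have hdm : Real.log 2 ≤ d m := hlog2.trans (hdmono hm)
  have h2' : Real.exp (Fexp^[m] c) = Real.exp (Fexp^[m] b) * Real.exp (d m) := by
    rw [← Real.exp_add]; simp [hd_def]
  have h9 : (2:ℝ) ≤ Real.exp (d m) := by
    calc (2:ℝ) = Real.exp (Real.log 2) := (Real.exp_log (by norm_num)).symm
    _ ≤ Real.exp (d m) := Real.exp_le_exp.2 hdm
  rw [Function.iterate_succ_apply', Function.iterate_succ_apply']
  simp only [Fexp]
  rw [show Real.exp (Fexp^[m] c) = Real.exp (Fexp^[m] b) * Real.exp (d m) from h2']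
  nlinarith [Real.exp_pos (Fexp^[m] b)]

section Orbit

variable {a T : ℕ → ℝ}

lemma pullback_le (ha : ∀ m, 0 ≤ a m) (hT : ∀ m, 0 ≤ T m)
    (hrec : ∀ m, T (m + 1) = Fexp (T m) - a (m + 1)) :
    ∀ k m : ℕ, Finv^[k + 1] (a (m + k + 1)) ≤ T m := by
  intro k
  induction k with
  | zero =>
    intro m
    have h1 : a (m + 1) ≤ Fexp (T m) := by have := hT (m + 1); have := hrec m; linarith
    calc Finv^[1] (a (m + 1)) = Finv (a (m + 1)) := by simp
    _ ≤ Finv (Fexp (T m)) := finv_mono (ha _) h1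
    _ = T m := finv_fexp _
  | succ k ih =>
    intro m
    have h2 : Finv^[k + 1] (a (m + 1 + k + 1)) ≤ T (m + 1) := ih (m + 1)
    have h3 : Finv^[k + 1] (a (m + k + 2)) ≤ Fexp (T m) := by
      have h4 := hrec m
      have h5 := ha (m + 1)
      have : m + 1 + k + 1 = m + k + 2 := by omega
      rw [this] at h2
      linarith
    calc Finv^[k + 1 + 1] (a (m + (k + 1) + 1))
        = Finv (Finv^[k + 1] (a (m + k + 2))) := by
          rw [Function.iterate_succ_apply', show m + (k + 1) + 1 = m + k + 2 by omega]
    _ ≤ Finv (Fexp (T m)) := finv_mono (finv_iter_nonneg _ (ha _)) h3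
    _ = T m := finv_fexp _

lemma limsup_le_c (ha : ∀ m, 0 ≤ a m) (hT : ∀ m, 0 ≤ T m)
    (hrec : ∀ m, T (m + 1) = Fexp (T m) - a (m + 1)) (m : ℕ) :
    Filter.limsup (fun j : ℕ => Finv^[j] (a j)) atTop ≤ Finv^[m] (T m) := by
  have hev : ∀ᶠ j : ℕ in atTop, Finv^[j] (a j) ≤ Finv^[m] (T m) := by
    filter_upwards [eventually_ge_atTop (m + 1)] with j hj
    obtain ⟨k, rfl⟩ : ∃ k, j = m + (k + 1) := ⟨j - m - 1, by omega⟩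
    rw [Function.iterate_add_apply]
    refine finv_iter_mono m (finv_iter_nonneg _ (ha _)) ?_
    have := pullback_le ha hT hrec k m
    have h : m + (k + 1) = m + k + 1 := by omega
    rw [h]
    exact this
  exact Filter.limsup_le_of_le
    (Filter.isCoboundedUnder_le_of_le _ fun j => finv_iter_nonneg j (ha j)) hev

lemma u_bdd (ha : ∀ m, 0 ≤ a m) (hT : ∀ m, 0 ≤ T m)
    (hrec : ∀ m, T (m + 1) = Fexp (T m) - a (m + 1)) :
    IsBoundedUnder (· ≤ ·) atTop (fun j : ℕ => Finv^[j] (a j)) := by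
  refine Filter.isBoundedUnder_of_eventually_le (a := T 0) ?_
  filter_upwards [eventually_ge_atTop 1] with j hj
  obtain ⟨k, rfl⟩ : ∃ k, j = k + 1 := ⟨j - 1, by omega⟩
  have := pullback_le ha hT hrec k 0
  simpa using this

lemma b_nonneg (ha : ∀ m, 0 ≤ a m) (hT : ∀ m, 0 ≤ T m)
    (hrec : ∀ m, T (m + 1) = Fexp (T m) - a (m + 1)) :
    0 ≤ Filter.limsup (fun j : ℕ => Finv^[j] (a j)) atTop :=
  Filter.le_limsup_of_frequently_le
    (Filter.Frequently.of_forall fun j => finv_iter_nonneg j (ha j))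
    (u_bdd ha hT hrec)

end Orbit

lemma fexp_continuous : Continuous Fexp := Real.continuous_exp.sub continuous_const

lemma exists_E {A L : ℝ} (hA : 0 ≤ A) (hL : 1 ≤ L) :
    ∃ E : ℝ, 0 ≤ E ∧ A + L * Real.log L + L * Finv E ≤ E := by
  have hlogL : 0 ≤ Real.log L := Real.log_nonneg hL
  have hC : 0 ≤ A + L * Real.log L := by nlinarith
  have hs0 : 0 ≤ Real.sqrt (A + L * Real.log L) := Real.sqrt_nonneg _
  have hs2 : Real.sqrt (A + L * Real.log L) ^ 2 = A + L * Real.log L := Real.sq_sqrt hC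
  refine ⟨Fexp (4 * L + 2 * Real.sqrt (A + L * Real.log L)),
    fexp_nonneg (by nlinarith), ?_⟩
  rw [finv_fexp]
  have hq := fexp_quad (show 0 ≤ 4 * L + 2 * Real.sqrt (A + L * Real.log L) by nlinarith)
  nlinarith

lemma main_core {a T : ℕ → ℝ} {b : ℝ}
    (ha : ∀ m, 0 ≤ a m) (hT : ∀ m, 0 ≤ T m)
    (hrec : ∀ m, T (m + 1) = Fexp (T m) - a (m + 1))
    (htend : Tendsto T atTop atTop)
    (hb : b = Filter.limsup (fun j : ℕ => Finv^[j] (a j)) atTop)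
    (hmin : ∀ S : ℕ → ℝ, (∀ m, 0 ≤ S m) →
      (∀ m, S (m + 1) = Fexp (S m) - a (m + 1)) → T 0 ≤ S 0)
    {K : ℝ} (hK : 0 < K) :
    (∃ C : ℝ, 0 < C ∧ ∃ m₀ : ℕ, ∀ m, m₀ ≤ m → a m < C * T m ^ K) ↔
    (∃ C : ℝ, 0 < C ∧ ∃ m₀ : ℕ, ∀ m, m₀ ≤ m → a m < C * (Fexp^[m] b) ^ K) := by
  have hb0 : 0 ≤ b := by rw [hb]; exact b_nonneg ha hT hrec
  have hbcs : ∀ m, b ≤ Finv^[m] (T m) := by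
    intro m; rw [hb]; exact limsup_le_c ha hT hrec m
  have hFbT : ∀ m, Fexp^[m] b ≤ T m := by
    intro m
    calc Fexp^[m] b ≤ Fexp^[m] (Finv^[m] (T m)) := fexp_iter_mono m (hbcs m)
    _ = T m := fexp_iter_finv_iter m (hT m)
  have hFb_nn : ∀ m, 0 ≤ Fexp^[m] b := fun m => fexp_iter_nonneg m hb0
  constructor
  · -- hard direction
    rintro ⟨C₁, hC₁, m₀, h1⟩
    -- the antitone sequence of pullbacks
    set cs : ℕ → ℝ := fun n => Finv^[n] (T n) with hcs
    have hcs_nn : ∀ n, 0 ≤ cs n := fun n => finv_iter_nonneg n (hT n)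
    have hcs_anti : Antitone cs := by
      refine antitone_nat_of_succ_le fun n => ?_
      have h1' : T (n + 1) ≤ Fexp (T n) := by have := hrec n; have := ha (n + 1); linarith
      calc cs (n + 1) = Finv^[n] (Finv (T (n + 1))) := Function.iterate_succ_apply Finv n _
      _ ≤ Finv^[n] (Finv (Fexp (T n))) :=
          finv_iter_mono n (finv_nonneg (hT _)) (finv_mono (hT _) h1')
      _ = cs n := by rw [finv_fexp]
    have hbdd : BddBelow (Set.range cs) := ⟨0, by rintro x ⟨n, rfl⟩; exact hcs_nn n⟩
    set c : ℝ := ⨅ n, cs n with hc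
    have hc_tend : Tendsto cs atTop (𝓝 c) := tendsto_atTop_ciInf hcs_anti hbdd
    have hble : b ≤ c := le_ciInf hbcs
    have hcle : ∀ n, c ≤ cs n := fun n => ciInf_le hbdd n
    -- minimality forces c ≤ b
    have hcb : c ≤ b := by
      by_contra hcon
      push_neg at hcon
      set β := (b + c) / 2 with hβ
      have hβpos : 0 < β := by simp only [hβ]; linarith
      have hβc : β < c := by simp only [hβ]; linarith
      have hbβ : b < β := by simp only [hβ]; linarith
      have hev : ∀ᶠ j : ℕ in atTop, Finv^[j] (a j) < β :=
        Filter.eventually_lt_of_limsup_lt (by rw [← hb]; exact hbβ) (u_bdd ha hT hrec)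
      obtain ⟨M, hM⟩ := eventually_atTop.1 hev
      have ha_lt : ∀ j, M ≤ j → a j < Fexp^[j] β := by
        intro j hj
        have h' := (fexp_iter_strictMono j) (hM j hj)
        rwa [fexp_iter_finv_iter j (ha j)] at h'
      obtain ⟨M₁, hM₁⟩ := eventually_atTop.1 ((tendsto_fexp_iter hβpos).eventually_ge_atTop 1)
      obtain ⟨M₂, hM₂⟩ := eventually_atTop.1 (eventually_ratio hβpos hβc)
      set N := max (max M M₁) M₂ with hN
      have hstart : 2 * Fexp^[N] β < T N := by
        have h1' := hM₂ N (le_max_right _ _)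
        have h2' : Fexp^[N] c ≤ T N := by
          calc Fexp^[N] c ≤ Fexp^[N] (cs N) := fexp_iter_mono N (hcle N)
          _ = T N := fexp_iter_finv_iter N (hT N)
        linarith
      -- the pullback sequence from 2·F^N(β) at time N
      set w : ℕ → ℝ := fun i => Nat.rec (motive := fun _ => ℝ) (2 * Fexp^[N] β)
        (fun i wi => Finv (wi + a (N - i))) i with hw
      have hw0 : w 0 = 2 * Fexp^[N] β := rfl
      have hwsucc : ∀ i, w (i + 1) = Finv (w i + a (N - i)) := fun _ => rfl
      have hwnn : ∀ i, 0 ≤ w i := by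
        intro i
        induction i with
        | zero =>
          rw [hw0]
          have := fexp_iter_nonneg N hβpos.le; linarith
        | succ i ih => rw [hwsucc]; exact finv_nonneg (add_nonneg ih (ha _))
      have hwlt : ∀ i, i ≤ N → w i < T (N - i) := by
        intro i
        induction i with
        | zero => intro _; simpa [hw0] using hstart
        | succ i ih =>
          intro hiN
          have hi : i ≤ N := by omega
          have IH := ih hi
          obtain ⟨j, hj1, hj2⟩ : ∃ j, N - i = j + 1 ∧ N - (i + 1) = j :=
            ⟨N - (i + 1), by omega, rfl⟩
          rw [hwsucc, hj2]
          have hTj : T j = Finv (T (j + 1) + a (j + 1)) := by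
            rw [hrec j, show Fexp (T j) - a (j + 1) + a (j + 1) = Fexp (T j) by ring, finv_fexp]
          rw [hTj]
          refine finv_lt_finv (add_nonneg (hwnn i) (ha _)) ?_
          rw [hj1] at IH
          rw [hj1]
          linarith
      -- the forward orbit starting at w N
      set S : ℕ → ℝ := fun j => Nat.rec (motive := fun _ => ℝ) (w N)
        (fun j Sj => Fexp Sj - a (j + 1)) j with hS
      have hS0 : S 0 = w N := rfl
      have hSrec : ∀ j, S (j + 1) = Fexp (S j) - a (j + 1) := fun _ => rfl
      have hSw : ∀ j, j ≤ N → S j = w (N - j) := by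
        intro j
        induction j with
        | zero => intro _; simpa using hS0
        | succ j ih =>
          intro hjN
          have hj : j ≤ N := by omega
          obtain ⟨i, hi1, hi2⟩ : ∃ i, N - j = i + 1 ∧ N - (j + 1) = i :=
            ⟨N - (j + 1), by omega, rfl⟩
          have hNi : N - i = j + 1 := by omega
          rw [hSrec, ih hj, hi1, hwsucc, hNi, fexp_finv (add_nonneg (hwnn i) (ha _)), hi2]
          ring
      have hSinv : ∀ k : ℕ, 2 * Fexp^[N + k] β ≤ S (N + k) := by
        intro k
        induction k with
        | zero =>
          rw [Nat.add_zero, hSw N le_rfl, Nat.sub_self, hw0]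
        | succ k ih =>
          have hy1 : 1 ≤ Fexp^[N + k + 1] β := hM₁ _ (by omega)
          have hstep : S (N + k + 1) = Fexp (S (N + k)) - a (N + k + 1) := hSrec _
          have halt : a (N + k + 1) < Fexp^[N + k + 1] β := ha_lt _ (by omega)
          have hmono : Fexp (2 * Fexp^[N + k] β) ≤ Fexp (S (N + k)) := fexp_mono ih
          have hiter : Fexp^[N + k + 1] β = Fexp (Fexp^[N + k] β) :=
            Function.iterate_succ_apply' Fexp (N + k) β
          have h2m := fexp_two_mul (Fexp^[N + k] β)
          rw [show N + (k + 1) = N + k + 1 by omega, hstep]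
          rw [hiter] at hy1 halt ⊢
          nlinarith
      have hSnn : ∀ j, 0 ≤ S j := by
        intro j
        rcases le_or_gt j N with h | h
        · rw [hSw j h]; exact hwnn _
        · obtain ⟨k, rfl⟩ : ∃ k, j = N + k := ⟨j - N, by omega⟩
          have h1' := hSinv k
          have h2' := fexp_iter_nonneg (N + k) hβpos.le
          linarith
      have hminS := hmin S hSnn hSrec
      have hfin := hwlt N le_rfl
      rw [Nat.sub_self] at hfin
      rw [hS0] at hminS
      linarith
    have hceqb : c = b := le_antisymm hcb hble
    -- growth estimate under hypothesis (1)
    set K' := max K 1 with hK'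
    have hK'1 : 1 ≤ K' := le_max_right _ _
    set C₀ := 1 + C₁ with hC₀
    have hC₀1 : 1 ≤ C₀ := by rw [hC₀]; linarith
    set A := Real.log (2 * C₀) with hA
    have hA0 : 0 ≤ A := Real.log_nonneg (by linarith)
    obtain ⟨N₁, hN₁⟩ := eventually_atTop.1 (htend.eventually_ge_atTop 1)
    set N₂ := max m₀ N₁ with hN₂
    have h8a : ∀ m, N₂ ≤ m → T m ≤ K' * Finv (T (m + 1)) + A := by
      intro m hm
      have hT1 : 1 ≤ T (m + 1) := hN₁ _ (by omega)
      have hTpos : 0 < T (m + 1) := by linarith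
      have ha1 : a (m + 1) < C₁ * T (m + 1) ^ K := h1 (m + 1) (by omega)
      set X := T (m + 1) ^ K' with hX
      have hX1 : 1 ≤ X := Real.one_le_rpow hT1 (by linarith)
      have hXK : T (m + 1) ^ K ≤ X := Real.rpow_le_rpow_of_exponent_le hT1 (le_max_left _ _)
      have hX1' : T (m + 1) ≤ X := by
        calc T (m + 1) = T (m + 1) ^ (1 : ℝ) := (Real.rpow_one _).symm
        _ ≤ X := Real.rpow_le_rpow_of_exponent_le hT1 hK'1
      have hFle : Fexp (T m) ≤ C₀ * X := by
        have h' := hrec m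
        have h'' := ha (m + 1)
        nlinarith
      have hTm : T m ≤ Finv (C₀ * X) := by
        rw [← finv_fexp (T m)]
        exact finv_mono (fexp_nonneg (hT m)) hFle
      have hlog : Finv (C₀ * X) ≤ A + K' * Finv (T (m + 1)) := by
        have h1' : (0 : ℝ) < C₀ * X := by nlinarith
        have h2' : 1 + C₀ * X ≤ 2 * C₀ * X := by nlinarith
        have h3' : Real.log (T (m + 1)) ≤ Finv (T (m + 1)) := by
          simp only [Finv]
          exact Real.log_le_log (by linarith) (by linarith)
        calc Finv (C₀ * X) = Real.log (1 + C₀ * X) := rfl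
        _ ≤ Real.log (2 * C₀ * X) := Real.log_le_log (by linarith) h2'
        _ = Real.log (2 * C₀) + Real.log X := Real.log_mul (by linarith) (by linarith)
        _ = A + K' * Real.log (T (m + 1)) := by rw [hX, Real.log_rpow hTpos, hA]
        _ ≤ A + K' * Finv (T (m + 1)) := by nlinarith
      linarith
    -- the additive constant E
    obtain ⟨E, hE0, hEkey⟩ := exists_E hA0 hK'1
    -- iterated estimate
    have h8b : ∀ k m, N₂ ≤ m → T m ≤ K' * Finv^[k] (T (m + k)) + E := by
      intro k
      induction k with
      | zero =>
        intro m hm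
        simp only [Function.iterate_zero, id_eq, Nat.add_zero]
        nlinarith [hT m]
      | succ k ih =>
        intro m hm
        have IH := ih (m + 1) (by omega)
        set w' := Finv^[k] (T (m + 1 + k)) with hw'
        have hw'0 : 0 ≤ w' := finv_iter_nonneg _ (hT _)
        have hstep := h8a m hm
        have hfv : Finv (T (m + 1)) ≤ Real.log K' + Finv w' + Finv E := by
          calc Finv (T (m + 1)) ≤ Finv (K' * w' + E) := finv_mono (hT _) IH
          _ ≤ Finv (K' * w') + Finv E := finv_add_le (mul_nonneg (by linarith) hw'0) hE0
          _ ≤ Real.log K' + Finv w' + Finv E := by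
              have := finv_mul_le hK'1 hw'0; linarith
        have hiter : Finv w' = Finv^[k + 1] (T (m + (k + 1))) := by
          rw [show m + (k + 1) = m + 1 + k by omega, Function.iterate_succ_apply' Finv k]
        calc T m ≤ K' * Finv (T (m + 1)) + A := hstep
        _ ≤ K' * (Real.log K' + Finv w' + Finv E) + A := by
            have := mul_le_mul_of_nonneg_left hfv (show (0:ℝ) ≤ K' by linarith)
            linarith
        _ = K' * Finv w' + (A + K' * Real.log K' + K' * Finv E) := by ring
        _ ≤ K' * Finv w' + E := by linarith
        _ = K' * Finv^[k + 1] (T (m + (k + 1))) + E := by rw [hiter]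
    -- pass to the limit
    have h8d : ∀ N, N₂ ≤ N → T N ≤ K' * Fexp^[N] b + E := by
      intro N hNN
      have hcomp : ∀ k : ℕ, T N ≤ K' * Fexp^[N] (cs (k + N)) + E := by
        intro k
        have h := h8b k N hNN
        have hid : Fexp^[N] (cs (k + N)) = Finv^[k] (T (N + k)) := by
          have e1 : cs (k + N) = Finv^[N] (Finv^[k] (T (N + k))) := by
            rw [show k + N = N + k by omega]
            exact Function.iterate_add_apply Finv N k (T (N + k))
          rw [e1]
          exact fexp_iter_finv_iter N (finv_iter_nonneg _ (hT _))
        rw [hid]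
        exact h
      have h1' : Tendsto (fun k : ℕ => cs (k + N)) atTop (𝓝 c) :=
        hc_tend.comp (tendsto_add_atTop_nat N)
      have h2' : Tendsto (fun k : ℕ => Fexp^[N] (cs (k + N))) atTop (𝓝 (Fexp^[N] b)) := by
        rw [← hceqb]
        exact ((fexp_continuous.iterate N).tendsto c).comp h1'
      have hlim : Tendsto (fun k : ℕ => K' * Fexp^[N] (cs (k + N)) + E) atTop
          (𝓝 (K' * Fexp^[N] b + E)) := (h2'.const_mul K').add_const E
      exact ge_of_tendsto' hlim hcomp
    -- b is positive since T escapes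
    have hbpos : 0 < b := by
      rcases lt_or_eq_of_le hb0 with h | h
      · exact h
      · exfalso
        obtain ⟨N', hN'⟩ := eventually_atTop.1 (htend.eventually_gt_atTop (K' * 0 + E))
        have h1' := h8d (max N₂ N') (le_max_left _ _)
        rw [← h, fexp_iter_zero] at h1'
        have h2' := hN' (max N₂ N') (le_max_right _ _)
        linarith
    -- conclude
    obtain ⟨N₃, hN₃⟩ := eventually_atTop.1 ((tendsto_fexp_iter hbpos).eventually_ge_atTop E)
    have hCpos : (0 : ℝ) < C₁ * (K' + 1) ^ K := by
      have : (0 : ℝ) < (K' + 1) ^ K := Real.rpow_pos_of_pos (by linarith) K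
      positivity
    refine ⟨C₁ * (K' + 1) ^ K, hCpos, max N₂ N₃, fun m hm => ?_⟩
    have hm2 : N₂ ≤ m := le_trans (le_max_left _ _) hm
    have hm3 : N₃ ≤ m := le_trans (le_max_right _ _) hm
    have hFE : E ≤ Fexp^[m] b := hN₃ m hm3
    have hTle : T m ≤ (K' + 1) * Fexp^[m] b := by
      have := h8d m hm2; linarith
    have hF0 : 0 ≤ Fexp^[m] b := hFb_nn m
    have hpow : T m ^ K ≤ ((K' + 1) * Fexp^[m] b) ^ K :=
      Real.rpow_le_rpow (hT m) hTle hK.le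
    have hmul : ((K' + 1) * Fexp^[m] b) ^ K = (K' + 1) ^ K * (Fexp^[m] b) ^ K :=
      Real.mul_rpow (by linarith) hF0
    have ham := h1 m (le_trans (le_max_left _ _) hm2)
    calc a m < C₁ * T m ^ K := ham
    _ ≤ C₁ * ((K' + 1) ^ K * (Fexp^[m] b) ^ K) := by
        rw [← hmul]; exact mul_le_mul_of_nonneg_left hpow hC₁.le
    _ = C₁ * (K' + 1) ^ K * (Fexp^[m] b) ^ K := by ring
  · -- easy direction
    rintro ⟨C₂, hC₂, m₀, h2⟩
    refine ⟨C₂, hC₂, m₀, fun m hm => ?_⟩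
    calc a m < C₂ * (Fexp^[m] b) ^ K := h2 m hm
    _ ≤ C₂ * T m ^ K :=
        mul_le_mul_of_nonneg_left (Real.rpow_le_rpow (hFb_nn m) (hFbT m) hK.le) hC₂.le

end ParabAux

namespace ParabAux

lemma ofLex_shiftA_iter (m : ℕ) : ∀ (s : Addr) (n : ℕ), ofLex (shiftA^[m] s) n = ofLex s (n + m) := by
  induction m with
  | zero => intro s n; rfl
  | succ m ih =>
    intro s n
    rw [Function.iterate_succ_apply, ih (shiftA s) n]
    show ofLex s (n + m + 1) = ofLex s (n + (m + 1))
    rw [Nat.add_assoc]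

lemma fmod_iter_fst (p : Addr × ℝ) : ∀ m : ℕ, (Fmod^[m] p).1 = shiftA^[m] p.1 := by
  intro m
  induction m with
  | zero => rfl
  | succ m ih =>
    rw [Function.iterate_succ_apply', Function.iterate_succ_apply']
    show shiftA ((Fmod^[m] p).1) = shiftA (shiftA^[m] p.1)
    rw [ih]

lemma fmod_iter_snd (s : Addr) (x : ℝ) (m : ℕ) :
    (Fmod^[m + 1] (s, x)).2
      = Fexp ((Fmod^[m] (s, x)).2) - 2 * Real.pi * |((ofLex s (m + 1) : ℤ) : ℝ)| := by
  rw [Function.iterate_succ_apply']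
  show Fexp ((Fmod^[m] (s, x)).2)
      - 2 * Real.pi * |((ofLex ((Fmod^[m] (s, x)).1) 1 : ℤ) : ℝ)| = _
  rw [fmod_iter_fst (s, x) m]
  show Fexp ((Fmod^[m] (s, x)).2)
      - 2 * Real.pi * |((ofLex (shiftA^[m] s) 1 : ℤ) : ℝ)| = _
  rw [ofLex_shiftA_iter m s 1, show 1 + m = m + 1 by omega]

lemma shift_iff {Q : ℝ → ℕ → Prop} :
    (∃ C : ℝ, 0 < C ∧ ∃ n₀ : ℕ, ∀ n : ℕ, n₀ ≤ n → 1 ≤ n → Q C (n - 1)) ↔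
    (∃ C : ℝ, 0 < C ∧ ∃ m₀ : ℕ, ∀ m : ℕ, m₀ ≤ m → Q C m) := by
  constructor
  · rintro ⟨C, hC, n₀, h⟩
    exact ⟨C, hC, n₀, fun m hm => by simpa using h (m + 1) (by omega) (by omega)⟩
  · rintro ⟨C, hC, m₀, h⟩
    exact ⟨C, hC, m₀ + 1, fun n hn h1 => h (n - 1) (by omega)⟩

end ParabAux


/-- **Endpoints satisfying a parabola condition** (Theorem 7.3): for a fast address `s`
with `t_n := T(𝓕^{n-1}(s,t_s))` and `b` the minimal potential, and any `K > 0`: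
`2π|s_n| < C₁ t_n^K` eventually (for some `C₁ > 0`) iff
`2π|s_n| < C₂ (F^{n-1}(b))^K` eventually (for some `C₂ > 0`). -/
theorem parabola_condition (s : Addr) (hfin : tS s ≠ ⊤)
    (hfast : (s, (tS s).toReal) ∈ Xset) (K : ℝ) (hK : 0 < K) :
    (∃ C₁ : ℝ, 0 < C₁ ∧ ∃ n₀ : ℕ, ∀ n : ℕ, n₀ ≤ n → 1 ≤ n →
        2 * Real.pi * |((ofLex s (n - 1) : ℤ) : ℝ)| <
          C₁ * ((Fmod^[n - 1] (s, (tS s).toReal)).2) ^ K) ↔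
    (∃ C₂ : ℝ, 0 < C₂ ∧ ∃ n₀ : ℕ, ∀ n : ℕ, n₀ ≤ n → 1 ≤ n →
        2 * Real.pi * |((ofLex s (n - 1) : ℤ) : ℝ)| <
          C₂ * (Fexp^[n - 1] (minPot s)) ^ K) := by
  have hXbar := hfast.1
  have htend := hfast.2
  have ha : ∀ m : ℕ, 0 ≤ 2 * Real.pi * |((ofLex s m : ℤ) : ℝ)| := fun m => by positivity
  have hT : ∀ m : ℕ, 0 ≤ (Fmod^[m] (s, (tS s).toReal)).2 := hXbar
  have hrec : ∀ m : ℕ, (Fmod^[m + 1] (s, (tS s).toReal)).2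
      = Fexp ((Fmod^[m] (s, (tS s).toReal)).2)
        - 2 * Real.pi * |((ofLex s (m + 1) : ℤ) : ℝ)| :=
    fun m => ParabAux.fmod_iter_snd s _ m
  have hmin : ∀ S : ℕ → ℝ, (∀ m, 0 ≤ S m) →
      (∀ m, S (m + 1) = Fexp (S m) - 2 * Real.pi * |((ofLex s (m + 1) : ℤ) : ℝ)|) →
      (Fmod^[0] (s, (tS s).toReal)).2 ≤ S 0 := by
    intro S hS hSrec
    have horbit : ∀ m, (Fmod^[m] (s, S 0)).2 = S m := by
      intro m
      induction m with
      | zero => rfl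
      | succ m ih => rw [ParabAux.fmod_iter_snd, ih, hSrec]
    have hXb : (s, S 0) ∈ Xbar := fun n => by rw [horbit n]; exact hS n
    have hle : tS s ≤ ENNReal.ofReal (S 0) := sInf_le ⟨S 0, ⟨hS 0, hXb⟩, rfl⟩
    have h2 := ENNReal.toReal_mono ENNReal.ofReal_ne_top hle
    rw [ENNReal.toReal_ofReal (hS 0)] at h2
    exact h2
  have hcore := ParabAux.main_core (a := fun m => 2 * Real.pi * |((ofLex s m : ℤ) : ℝ)|)
      (T := fun m => (Fmod^[m] (s, (tS s).toReal)).2) (b := minPot s)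
      ha hT hrec htend rfl hmin hK
  exact (ParabAux.shift_iff (Q := fun C m =>
      2 * Real.pi * |((ofLex s m : ℤ) : ℝ)| <
        C * ((Fmod^[m] (s, (tS s).toReal)).2) ^ K)).trans
    (hcore.trans (ParabAux.shift_iff (Q := fun C m =>
      2 * Real.pi * |((ofLex s m : ℤ) : ℝ)| <
        C * (Fexp^[m] (minPot s)) ^ K)).symm)
end
end

section
/- Let Q > 0 and Y_Q := {(s,t) ∈ X̄ : T(𝓕ⁿ(s,t)) ≥ Q for all n ≥ 0}. Suppose f : Y_Q ∩ X → X is continuous (with respect to the topology in which ℤ^ℕ carries the order topology of the lexicographic order and ℤ^ℕ × ℝ the product topology, and the subspace topologies on Y_Q ∩ X and X), satisfies f(𝓕(s,t)) = 𝓕(f(s,t)) for all (s,t) ∈ Y_Q ∩ X, and preserves addresses, i.e. f(s,t) ∈ {s} × [0,∞) for all (s,t) ∈ Y_Q ∩ X. Then f is the identity. -/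
open Filter Topology ENNReal

noncomputable section

lemma Fexp_mono : Monotone Fexp := fun a b h => by
  have := Real.exp_le_exp.2 h
  simp only [Fexp]; linarith

lemma self_le_Fexp {x : ℝ} (hx : 0 ≤ x) : x ≤ Fexp x := by
  have := Real.add_one_le_exp x
  simp only [Fexp]; linarith

lemma Fexp_superadd {a d b : ℝ} (ha : 0 ≤ a) (hd : 0 ≤ d) (h : a + d ≤ b) :
    Fexp a + Fexp d ≤ Fexp b := by
  have h1 : Real.exp (a + d) ≤ Real.exp b := Real.exp_le_exp.2 h
  rw [Real.exp_add] at h1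
  have h2 : (1:ℝ) ≤ Real.exp a := by nlinarith [Real.add_one_le_exp a]
  have h3 : (1:ℝ) ≤ Real.exp d := by nlinarith [Real.add_one_le_exp d]
  simp only [Fexp]; nlinarith

lemma Fexp_gap {δ y : ℝ} (h0 : 0 ≤ δ) (h : δ ≤ y) : Fexp δ - δ ≤ Fexp y - y := by
  have h1 : Real.exp y = Real.exp δ * Real.exp (y - δ) := by
    rw [← Real.exp_add]; ring_nf
  have h2 := Real.add_one_le_exp (y - δ)
  have h3 : (1:ℝ) ≤ Real.exp δ := by nlinarith [Real.add_one_le_exp δ]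
  simp only [Fexp]; nlinarith

lemma Fexp_iter_ge {δ : ℝ} (h0 : 0 ≤ δ) (n : ℕ) :
    δ + n * (Fexp δ - δ) ≤ Fexp^[n] δ := by
  induction n with
  | zero => simp
  | succ n ih =>
    have hc : 0 ≤ Fexp δ - δ := by have := self_le_Fexp h0; linarith
    have hx : δ ≤ Fexp^[n] δ := by nlinarith [Nat.cast_nonneg (α := ℝ) n]
    have hg := Fexp_gap h0 hx
    rw [Function.iterate_succ_apply']
    push_cast
    nlinarith [Nat.cast_nonneg (α := ℝ) n]

lemma Fexp_iter_ge_self {δ : ℝ} (h0 : 0 ≤ δ) (n : ℕ) : δ ≤ Fexp^[n] δ := by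
  have h := Fexp_iter_ge h0 n
  have hc : 0 ≤ Fexp δ - δ := by have := self_le_Fexp h0; linarith
  nlinarith [Nat.cast_nonneg (α := ℝ) n]

def pot (s : Addr) (t : ℝ) : ℕ → ℝ
  | 0 => t
  | n + 1 => Fexp (pot s t n) - 2 * Real.pi * |((ofLex s (n + 1) : ℤ) : ℝ)|

lemma iterate_Fmod (s : Addr) (t : ℝ) (n : ℕ) :
    Fmod^[n] (s, t) = (toLex fun k => ofLex s (k + n), pot s t n) := by
  induction n with
  | zero => rfl
  | succ n ih =>
    rw [Function.iterate_succ_apply', ih]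
    unfold Fmod shiftA
    dsimp only
    congr 1
    · apply congrArg toLex
      funext k
      simp only [ofLex_toLex]
      have : k + 1 + n = k + (n + 1) := by omega
      rw [this]
    · show Fexp (pot s t n) - 2 * Real.pi * |((ofLex (toLex fun k => ofLex s (k + n)) 1 : ℤ) : ℝ)|
        = pot s t (n + 1)
      simp only [ofLex_toLex, pot]
      norm_num [Nat.add_comm]

lemma snd_iterate (s : Addr) (t : ℝ) (n : ℕ) : (Fmod^[n] (s, t)).2 = pot s t n := by
  rw [iterate_Fmod]

lemma pot_mono (s : Addr) {t t' : ℝ} (h : t ≤ t') : ∀ n, pot s t n ≤ pot s t' n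
  | 0 => h
  | n + 1 => by
    have h1 := pot_mono s h n
    have h2 := Fexp_mono h1
    simp only [pot]; linarith

lemma pot_congr {s s' : Addr} (t : ℝ) :
    ∀ n, (∀ k, 1 ≤ k → k ≤ n → ofLex s k = ofLex s' k) → pot s t n = pot s' t n
  | 0, _ => rfl
  | n + 1, h => by
    have ih := pot_congr t n (fun k h1 h2 => h k h1 (h2.trans (Nat.le_succ n)))
    simp only [pot, ih, h (n + 1) (by omega) le_rfl]

lemma pot_gap (s : Addr) {w t δ : ℝ} (h0 : 0 ≤ δ) (h : w + δ ≤ t) :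
    ∀ n, (∀ k, k < n → 0 ≤ pot s w k) → pot s w n + Fexp^[n] δ ≤ pot s t n
  | 0, _ => by simpa [pot] using h
  | n + 1, hw => by
    have ih := pot_gap s h0 h n (fun k hk => hw k (hk.trans (Nat.lt_succ_self n)))
    have ha : 0 ≤ pot s w n := hw n (Nat.lt_succ_self n)
    have hd : 0 ≤ Fexp^[n] δ := le_trans h0 (Fexp_iter_ge_self h0 n)
    have hs := Fexp_superadd ha hd ih
    simp only [pot]
    rw [Function.iterate_succ_apply']
    linarith

lemma pot_zero_entries {s : Addr} (h : ∀ k, 1 ≤ k → ofLex s k = 0) (c : ℝ) :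
    ∀ n, pot s c n = Fexp^[n] c
  | 0 => rfl
  | n + 1 => by
    simp only [pot, pot_zero_entries h c n, h (n + 1) (by omega),
      Function.iterate_succ_apply']
    norm_num

lemma Fexp_half {x : ℝ} (hx : 1 ≤ x) : x + 1 / 2 ≤ Fexp x := by
  have h1 := Fexp_gap (by norm_num : (0:ℝ) ≤ 1) hx
  have h2 : (1:ℝ) + 1 / 2 ≤ Fexp 1 := by
    simp only [Fexp]
    nlinarith [Real.exp_one_gt_d9]
  linarith

lemma Fexp_iter_half {c : ℝ} (hc : 1 ≤ c) (n : ℕ) : c + n * (1 / 2) ≤ Fexp^[n] c := by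
  have hg : (1:ℝ) / 2 ≤ Fexp c - c := by have := Fexp_half hc; linarith
  nlinarith [Fexp_iter_ge (by linarith : (0:ℝ) ≤ c) n, Nat.cast_nonneg (α := ℝ) n]

lemma tendsto_pot_of_tail {s : Addr} {t c : ℝ} {N : ℕ} (hc : 1 ≤ c)
    (h : ∀ j, pot s t (N + j) = Fexp^[j] c) :
    Tendsto (fun n => pot s t n) atTop atTop := by
  rw [tendsto_atTop]
  intro b
  obtain ⟨j0, hj0⟩ : ∃ j0 : ℕ, b ≤ c + j0 * (1 / 2) := by
    obtain ⟨j0, hj0⟩ := exists_nat_ge ((b - c) * 2)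
    exact ⟨j0, by linarith⟩
  rw [eventually_atTop]
  refine ⟨N + j0, fun n hn => ?_⟩
  obtain ⟨j, rfl⟩ : ∃ j, n = N + j := ⟨n - N, by omega⟩
  have hj : (j0 : ℝ) ≤ j := Nat.cast_le.2 (by omega)
  have h2 := Fexp_iter_half hc j
  rw [h j]
  linarith

lemma Fmod_mem_inv {Q : ℝ} {q : Addr × ℝ} (hq : q ∈ Yset Q ∩ Xset) :
    Fmod q ∈ Yset Q ∩ Xset := by
  refine ⟨⟨fun n => ?_, fun n => ?_⟩, ⟨fun n => ?_, ?_⟩⟩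
  · rw [← Function.iterate_succ_apply]; exact hq.1.1 (n + 1)
  · rw [← Function.iterate_succ_apply]; exact hq.1.2 (n + 1)
  · rw [← Function.iterate_succ_apply]; exact hq.1.1 (n + 1)
  · have h1 : Tendsto (fun n : ℕ => (Fmod^[n + 1] q).2) atTop atTop :=
      hq.2.2.comp (tendsto_add_atTop_nat 1)
    have h2 : (fun n : ℕ => (Fmod^[n] (Fmod q)).2) = fun n : ℕ => (Fmod^[n + 1] q).2 := by
      funext n; rw [Function.iterate_succ_apply]
    rw [h2]; exact h1

lemma iterate_mem {Q : ℝ} {q : Addr × ℝ} (hq : q ∈ Yset Q ∩ Xset) (n : ℕ) :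
    Fmod^[n] q ∈ Yset Q ∩ Xset := by
  induction n with
  | zero => exact hq
  | succ n ih => rw [Function.iterate_succ_apply']; exact Fmod_mem_inv ih

/-- **No nontrivial self-conjugacies** (Theorem 8.1): a continuous map
`f : Y_Q ∩ X → X` (for the lexicographic order topology on addresses and the product
topology) commuting with `𝓕` and preserving each ray `{s} × [0,∞)` is the identity. -/
theorem no_self_conjugacy (Q : ℝ) (hQ : 0 < Q) (f : Addr × ℝ → Addr × ℝ)
    (hmaps : Set.MapsTo f (Yset Q ∩ Xset) Xset)
    (hcont : ContinuousOn f (Yset Q ∩ Xset))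
    (hcomm : ∀ p ∈ Yset Q ∩ Xset, f (Fmod p) = Fmod (f p))
    (haddr : ∀ p ∈ Yset Q ∩ Xset, (f p).1 = p.1 ∧ 0 ≤ (f p).2) :
    ∀ p ∈ Yset Q ∩ Xset, f p = p := by
  have hcommit : ∀ (n : ℕ) (q : Addr × ℝ), q ∈ Yset Q ∩ Xset →
      f (Fmod^[n] q) = Fmod^[n] (f q) := by
    intro n
    induction n with
    | zero => intro q _; rfl
    | succ n ih =>
      intro q hq
      rw [Function.iterate_succ_apply', Function.iterate_succ_apply',
        hcomm _ (iterate_mem hq n), ih q hq]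
  rintro ⟨s, t⟩ hp
  set u := (f (s, t)).2 with hu
  have hfp : f (s, t) = (s, u) := Prod.ext_iff.2 ⟨(haddr _ hp).1, rfl⟩
  suffices hust : u = t by rw [hfp, hust]
  by_contra hne
  -- basic facts about the orbit of p
  have htQ : ∀ n, Q ≤ pot s t n := by
    intro n; rw [← snd_iterate]; exact hp.1.2 n
  have htT : Tendsto (fun n => pot s t n) atTop atTop := by
    have h := hp.2.2; simpa only [snd_iterate] using h
  -- constants
  set R := max Q 1 with hR
  have hR1 : (1:ℝ) ≤ R := le_max_right _ _
  have hRQ : Q ≤ R := le_max_left _ _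
  have hπ : 0 < Real.pi := Real.pi_pos
  set δ := |t - u| / 2 with hδ
  have hδ0 : 0 < δ := by
    have h1 : t - u ≠ 0 := sub_ne_zero.2 (Ne.symm hne)
    have h2 : 0 < |t - u| := abs_pos.2 h1
    rw [hδ]; linarith
  set c := Fexp δ - δ with hc
  have hc0 : 0 < c := by
    rw [hc]; simp only [Fexp]
    nlinarith [Real.add_one_lt_exp (ne_of_gt hδ0)]
  -- the perturbed addresses
  set M : ℕ → ℤ := fun N =>
    ⌈(Fexp (pot s t N) - R - 2 * Real.pi) / (2 * Real.pi)⌉ with hM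
  set sN : ℕ → Addr := fun N => toLex fun k =>
    if k ≤ N then ofLex s k else if k = N + 1 then M N else 0 with hsN
  have entry_le : ∀ N k, k ≤ N → ofLex (sN N) k = ofLex s k := by
    intro N k hk
    show (if k ≤ N then ofLex s k else if k = N + 1 then M N else 0) = ofLex s k
    rw [if_pos hk]
  have entry_top : ∀ N, ofLex (sN N) (N + 1) = M N := by
    intro N
    show (if N + 1 ≤ N then ofLex s (N + 1) else if N + 1 = N + 1 then M N else 0) = M N
    rw [if_neg (by omega), if_pos rfl]
  have entry_big : ∀ N k, N + 2 ≤ k → ofLex (sN N) k = 0 := by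
    intro N k hk
    show (if k ≤ N then ofLex s k else if k = N + 1 then M N else 0) = 0
    rw [if_neg (by omega), if_neg (by omega)]
  -- bounds on M N in the regime
  have hMb : ∀ N, R + 4 * Real.pi + 1 ≤ pot s t N →
      R < Fexp (pot s t N) - 2 * Real.pi * (M N : ℝ) ∧
      Fexp (pot s t N) - 2 * Real.pi * (M N : ℝ) ≤ R + 2 * Real.pi ∧
      1 ≤ (M N : ℝ) := by
    intro N hN
    have h2π : 0 < 2 * Real.pi := by positivity
    have hFt : R + 4 * Real.pi + 1 ≤ Fexp (pot s t N) :=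
      le_trans hN (self_le_Fexp (by linarith [htQ N]))
    set v := (Fexp (pot s t N) - R - 2 * Real.pi) / (2 * Real.pi) with hv
    have hvmul : v * (2 * Real.pi) = Fexp (pot s t N) - R - 2 * Real.pi := by
      rw [hv]; field_simp
    have hle : v ≤ (M N : ℝ) := Int.le_ceil v
    have hlt : (M N : ℝ) < v + 1 := Int.ceil_lt_add_one v
    have hle' : v * (2 * Real.pi) ≤ (M N : ℝ) * (2 * Real.pi) :=
      mul_le_mul_of_nonneg_right hle h2π.le
    have hlt' : (M N : ℝ) * (2 * Real.pi) < (v + 1) * (2 * Real.pi) :=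
      mul_lt_mul_of_pos_right hlt h2π
    refine ⟨by nlinarith, by nlinarith, by nlinarith⟩
  -- s < sN N in the regime
  have hsgt : ∀ N, R + 2 * Real.pi + 1 ≤ pot s t (N + 1) →
      R + 4 * Real.pi + 1 ≤ pot s t N → s < sN N := by
    intro N hN1 hN2
    have hb := hMb N hN2
    have habs : 2 * Real.pi * |((ofLex s (N + 1) : ℤ) : ℝ)|
        = Fexp (pot s t N) - pot s t (N + 1) := by
      simp only [pot]; ring
    have hMlt : ofLex s (N + 1) < M N := by
      have h3 : ((ofLex s (N + 1) : ℤ) : ℝ) ≤ |((ofLex s (N + 1) : ℤ) : ℝ)| := le_abs_self _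
      have h4 : |((ofLex s (N + 1) : ℤ) : ℝ)| < (M N : ℝ) := by nlinarith [hb.2.1]
      exact_mod_cast lt_of_le_of_lt h3 h4
    exact ⟨N + 1, fun j hj => (entry_le N j (by omega)).symm,
      lt_of_lt_of_eq hMlt (entry_top N).symm⟩
  -- potentials of the perturbed points
  have hpot_le : ∀ N k, k ≤ N → pot (sN N) t k = pot s t k := by
    intro N k hk
    exact (pot_congr t k (fun j h1 h2 => (entry_le N j (h2.trans hk)).symm)).symm
  have hpot_top : ∀ N, 1 ≤ (M N : ℝ) →
      pot (sN N) t (N + 1) = Fexp (pot s t N) - 2 * Real.pi * (M N : ℝ) := by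
    intro N hM1
    show Fexp (pot (sN N) t N) - 2 * Real.pi * |((ofLex (sN N) (N + 1) : ℤ) : ℝ)| = _
    rw [hpot_le N N le_rfl, entry_top N, abs_of_nonneg (by exact_mod_cast (by linarith : (0:ℝ) ≤ (M N : ℝ)))]
  have hpot_tail : ∀ N j, pot (sN N) t (N + 1 + j) = Fexp^[j] (pot (sN N) t (N + 1)) := by
    intro N j
    induction j with
    | zero => rfl
    | succ j ih =>
      show Fexp (pot (sN N) t (N + 1 + j)) -
          2 * Real.pi * |((ofLex (sN N) (N + 1 + j + 1) : ℤ) : ℝ)| = _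
      rw [entry_big N (N + 1 + j + 1) (by omega), ih, Function.iterate_succ_apply']
      norm_num
  -- membership of the perturbed points
  have hpNmem : ∀ N, R + 4 * Real.pi + 1 ≤ pot s t N →
      ((sN N, t) : Addr × ℝ) ∈ Yset Q ∩ Xset := by
    intro N hN2
    obtain ⟨hb1, hb2, hb3⟩ := hMb N hN2
    have hpt : pot (sN N) t (N + 1) = Fexp (pot s t N) - 2 * Real.pi * (M N : ℝ) :=
      hpot_top N hb3
    have htail : ∀ j, pot (sN N) t (N + 1 + j)
        = Fexp^[j] (Fexp (pot s t N) - 2 * Real.pi * (M N : ℝ)) := by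
      intro j; rw [hpot_tail N j, hpt]
    have ht1R : (1:ℝ) ≤ Fexp (pot s t N) - 2 * Real.pi * (M N : ℝ) := by linarith
    have hall : ∀ n, Q ≤ pot (sN N) t n := by
      intro n
      rcases le_or_gt n N with h | h
      · rw [hpot_le N n h]; exact htQ n
      · obtain ⟨j, rfl⟩ : ∃ j, n = N + 1 + j := ⟨n - (N + 1), by omega⟩
        rw [htail j]
        have h2 := Fexp_iter_ge_self (by linarith : (0:ℝ) ≤
          Fexp (pot s t N) - 2 * Real.pi * (M N : ℝ)) j
        linarith
    have htend : Tendsto (fun n => pot (sN N) t n) atTop atTop :=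
      tendsto_pot_of_tail ht1R htail
    refine ⟨⟨fun n => ?_, fun n => ?_⟩, ⟨fun n => ?_, ?_⟩⟩
    · rw [snd_iterate]; linarith [hall n]
    · rw [snd_iterate]; exact hall n
    · rw [snd_iterate]; linarith [hall n]
    · simpa only [snd_iterate] using htend
  -- eventual facts
  have hev1 : ∀ᶠ N in atTop, R + 2 * Real.pi + 1 ≤ pot s t (N + 1) :=
    (htT.comp (tendsto_add_atTop_nat 1)).eventually (eventually_ge_atTop _)
  have hev2 : ∀ᶠ N in atTop, R + 4 * Real.pi + 1 ≤ pot s t N :=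
    htT.eventually (eventually_ge_atTop _)
  -- convergence of the perturbed addresses and continuity
  have hsT : Tendsto sN atTop (𝓝 s) := by
    rw [tendsto_order]
    constructor
    · intro a ha
      filter_upwards [hev1, hev2] with N h1 h2
      exact lt_trans ha (hsgt N h1 h2)
    · intro b hb
      obtain ⟨i, hib, hlt⟩ := hb
      filter_upwards [eventually_ge_atTop i] with N hN
      exact ⟨i, fun j hj => (entry_le N j (by omega)).trans (hib j hj),
        lt_of_eq_of_lt (entry_le N i (by omega)) hlt⟩
  have hpT : Tendsto (fun N => ((sN N, t) : Addr × ℝ)) atTop (𝓝 (s, t)) :=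
    hsT.prodMk_nhds tendsto_const_nhds
  have hmemev : ∀ᶠ N in atTop, ((sN N, t) : Addr × ℝ) ∈ Yset Q ∩ Xset := by
    filter_upwards [hev2] with N h2
    exact hpNmem N h2
  have hfT : Tendsto (fun N => (f (sN N, t)).2) atTop (𝓝 u) := by
    have h1 : Tendsto (fun N => f (sN N, t)) atTop (𝓝 (f (s, t))) :=
      Filter.Tendsto.comp (hcont _ hp) (tendsto_nhdsWithin_iff.mpr ⟨hpT, hmemev⟩)
    exact (continuous_snd.tendsto (f (s, t))).comp h1
  have hclose : ∀ᶠ N in atTop, (f (sN N, t)).2 ∈ Set.Ioo (u - δ) (u + δ) :=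
    hfT (Ioo_mem_nhds (by linarith) (by linarith))
  -- the compact reference set
  have hzero : ∀ k, 1 ≤ k → ofLex ((toLex fun _ => (0:ℤ)) : Addr) k = 0 := fun k _ => rfl
  set K : Set (Addr × ℝ) :=
    {((toLex fun _ => (0:ℤ)) : Addr)} ×ˢ Set.Icc (Fexp R) (Fexp (R + 2 * Real.pi)) with hK
  have hKS : K ⊆ Yset Q ∩ Xset := by
    rintro ⟨a, x⟩ ⟨ha, hx⟩
    simp only [Set.mem_singleton_iff] at ha
    subst ha
    have hFR : R ≤ Fexp R := self_le_Fexp (by linarith)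
    have hx1 : (1:ℝ) ≤ x := by linarith [hx.1]
    have hpz : ∀ n, pot (toLex fun _ => (0:ℤ)) x n = Fexp^[n] x := pot_zero_entries hzero x
    have hall : ∀ n, Q ≤ pot (toLex fun _ => (0:ℤ)) x n := by
      intro n; rw [hpz n]
      have h2 := Fexp_iter_ge_self (by linarith : (0:ℝ) ≤ x) n
      linarith [hx.1]
    have htd : Tendsto (fun n => pot (toLex fun _ => (0:ℤ)) x n) atTop atTop :=
      tendsto_pot_of_tail (N := 0) hx1 (fun j => by rw [Nat.zero_add]; exact hpz j)
    refine ⟨⟨fun n => ?_, fun n => ?_⟩, ⟨fun n => ?_, ?_⟩⟩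
    · rw [snd_iterate]; linarith [hall n]
    · rw [snd_iterate]; exact hall n
    · rw [snd_iterate]; linarith [hall n]
    · simpa only [snd_iterate] using htd
  have hKcomp : IsCompact K := isCompact_singleton.prod isCompact_Icc
  have hfKc : IsCompact (f '' K) := hKcomp.image_of_continuousOn (hcont.mono hKS)
  obtain ⟨B, hB⟩ := (hfKc.image continuous_snd).bddAbove
  -- choosing N
  have hlin : Tendsto (fun N : ℕ => δ + (N : ℝ) * c) atTop atTop :=
    tendsto_atTop_add_const_left atTop δ (tendsto_natCast_atTop_atTop.atTop_mul_const hc0)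
  have hev3 : ∀ᶠ N : ℕ in atTop, R + 2 * Real.pi < δ + (N : ℝ) * c :=
    hlin.eventually (eventually_gt_atTop _)
  have hev4 : ∀ᶠ N : ℕ in atTop, B < δ + (N : ℝ) * c :=
    hlin.eventually (eventually_gt_atTop _)
  obtain ⟨N, hN1, hN2, hN3, hN4, hNc⟩ :=
    (hev1.and (hev2.and (hev3.and (hev4.and hclose)))).exists
  -- data at the chosen N
  have hmemN : ((sN N, t) : Addr × ℝ) ∈ Yset Q ∩ Xset := hpNmem N hN2
  obtain ⟨hb1, hb2, hb3⟩ := hMb N hN2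
  set u' := (f (sN N, t)).2 with hu'
  have hfN : f (sN N, t) = (sN N, u') := Prod.ext_iff.2 ⟨(haddr _ hmemN).1, rfl⟩
  have hfNX : f (sN N, t) ∈ Xset := hmaps hmemN
  have hu'orb : ∀ n, 0 ≤ pot (sN N) u' n := by
    intro n
    have h := hfNX.1 n
    rw [hfN, snd_iterate] at h
    exact h
  have htNN : pot (sN N) t N = pot s t N := hpot_le N N le_rfl
  have hstepu' : ∀ x : ℝ, pot (sN N) x (N + 1)
      = Fexp (pot (sN N) x N) - 2 * Real.pi * (M N : ℝ) := by
    intro x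
    show Fexp (pot (sN N) x N) - 2 * Real.pi * |((ofLex (sN N) (N + 1) : ℤ) : ℝ)| = _
    rw [entry_top N, abs_of_nonneg (by exact_mod_cast (by linarith : (0:ℝ) ≤ (M N : ℝ)))]
  have hiter1 : δ + ((N : ℝ) + 1) * c ≤ Fexp (Fexp^[N] δ) := by
    have h := Fexp_iter_ge hδ0.le (N + 1)
    rw [Function.iterate_succ_apply'] at h
    push_cast at h
    rw [← hc] at h
    exact h
  have hFiterN : 0 ≤ Fexp^[N] δ := le_trans hδ0.le (Fexp_iter_ge_self hδ0.le N)
  rcases lt_or_gt_of_ne hne with hut | hut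
  · -- u < t : contradiction with nonnegativity of the image orbit
    have hδeq : δ = (t - u) / 2 := by rw [hδ, abs_of_pos (by linarith)]
    have hw : u' + δ ≤ t := by linarith [hNc.2]
    have hgapN := pot_gap (sN N) hδ0.le hw N (fun k _ => hu'orb k)
    have hsup := Fexp_superadd (hu'orb N) hFiterN hgapN
    rw [htNN] at hsup
    have h1 := hu'orb (N + 1)
    rw [hstepu' u'] at h1
    linarith [hN3, hc0]
  · -- u > t : contradiction with compactness
    have hδeq : δ = (u - t) / 2 := by
      rw [hδ, abs_of_neg (by linarith : t - u < 0)]; ring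
    have hw : t + δ ≤ u' := by linarith [hNc.1]
    have hgapN := pot_gap (sN N) hδ0.le hw N
      (fun k hk => by rw [hpot_le N k hk.le]; linarith [htQ k])
    rw [htNN] at hgapN
    have hsup := Fexp_superadd (by linarith [htQ N] : (0:ℝ) ≤ pot s t N) hFiterN hgapN
    have h1 : Fexp (Fexp^[N] δ) + R ≤ pot (sN N) u' (N + 1) := by
      rw [hstepu' u']
      linarith [hb1]
    have h2 : pot (sN N) u' (N + 2) = Fexp (pot (sN N) u' (N + 1)) := by
      show Fexp (pot (sN N) u' (N + 1)) -
          2 * Real.pi * |((ofLex (sN N) (N + 2) : ℤ) : ℝ)| = _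
      rw [entry_big N (N + 2) le_rfl]
      norm_num
    have h3 : B < pot (sN N) u' (N + 2) := by
      have h4 : 0 ≤ pot (sN N) u' (N + 1) := hu'orb (N + 1)
      have h5 := self_le_Fexp h4
      rw [h2]
      linarith [hN4, hc0]
    have hqK : Fmod^[N + 2] ((sN N, t) : Addr × ℝ) ∈ K := by
      rw [iterate_Fmod]
      refine Set.mem_prod.2 ⟨?_, ?_⟩
      · simp only [Set.mem_singleton_iff]
        apply congrArg toLex
        funext k
        exact entry_big N (k + (N + 2)) (by omega)
      · have h6 : pot (sN N) t (N + 2) = Fexp (pot (sN N) t (N + 1)) := hpot_tail N 1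
        have h7 := hpot_top N hb3
        rw [h6, h7]
        exact ⟨Fexp_mono hb1.le, Fexp_mono hb2⟩
    have h8 : (f (Fmod^[N + 2] ((sN N, t) : Addr × ℝ))).2 ≤ B :=
      hB (Set.mem_image_of_mem Prod.snd (Set.mem_image_of_mem f hqK))
    rw [hcommit (N + 2) _ hmemN, hfN, snd_iterate] at h8
    linarith
end
end

section
/- Let f : ℤ^ℕ → ℤ^ℕ be a bijection of the space of external addresses that is strictly order-preserving for the lexicographic order and commutes with the shift, f(σ(s)) = σ(f(s)) for all s. Then there exists j ∈ ℤ such that f(s₁s₂s₃…) = (s₁+j)(s₂+j)(s₃+j)… for all external addresses s = s₁s₂s₃…. -/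
open Filter Topology ENNReal

noncomputable section

private def cstA (a : ℤ) : Addr := toLex fun _ => a
private def sqA (a m : ℤ) : Addr := toLex fun n => if n = 0 then a else m

private lemma lex_lt_of (x y : ℕ → ℤ) (i : ℕ) (h1 : ∀ j < i, x j = y j) (h2 : x i < y i) :
    toLex x < toLex y := ⟨i, h1, h2⟩

private lemma lex_lt_elim {x y : ℕ → ℤ} (h : toLex x < toLex y) :
    ∃ i, (∀ j < i, x j = y j) ∧ x i < y i := h

private lemma int_translate (g : ℤ → ℤ) (h1 : StrictMono g) (h2 : Function.Surjective g) :
    ∀ k, g k = k + g 0 := by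
  have step : ∀ k, g (k + 1) = g k + 1 := by
    intro k
    have hlt : g k < g (k + 1) := h1 (by omega)
    obtain ⟨m, hm⟩ := h2 (g k + 1)
    have h3 : k < m := h1.lt_iff_lt.mp (by omega)
    have h4 : m ≤ k + 1 := h1.le_iff_le.mp (by omega)
    rw [show m = k + 1 by omega] at hm
    omega
  intro k
  induction k using Int.induction_on with
  | zero => omega
  | succ n ih => have := step n; omega
  | pred n ih =>
      have h := step (-(n : ℤ) - 1)
      rw [show (-(n : ℤ) - 1 + 1) = -n by ring] at h
      omega

private lemma shiftA_cst (a : ℤ) : shiftA (cstA a) = cstA a := rfl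

private lemma shiftA_sq (a m : ℤ) : shiftA (sqA a m) = cstA m := by
  refine congrArg toLex (funext fun n => ?_)
  show (if n + 1 = 0 then a else m) = m
  simp

private lemma cst_inj {a b : ℤ} (h : cstA a = cstA b) : a = b := by
  have := congrFun (congrArg ofLex h) 0
  simpa [cstA] using this

private lemma cst_lt_cst {a b : ℤ} (h : a < b) : cstA a < cstA b :=
  lex_lt_of _ _ 0 (fun j hj => absurd hj (Nat.not_lt_zero j)) h

private lemma cst_lt_cst_elim {a b : ℤ} (h : cstA a < cstA b) : a < b := by
  obtain ⟨i, _, hl⟩ := lex_lt_elim h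
  exact hl

private lemma fixed_eq_cst {s : Addr} (h : shiftA s = s) : s = cstA (ofLex s 0) := by
  have key : ∀ n, ofLex s n = ofLex s 0 := by
    intro n
    induction n with
    | zero => rfl
    | succ k ih =>
        have := congrFun (congrArg ofLex h) k
        simp only [shiftA, ofLex_toLex] at this
        rw [this, ih]
  have : ofLex s = fun _ => ofLex s 0 := funext key
  rw [← toLex_ofLex s, this]; rfl

private lemma tail_cst_eq_sq {s : Addr} {c : ℤ} (h : shiftA s = cstA c) :
    s = sqA (ofLex s 0) c := by
  have key : ∀ n, ofLex s (n + 1) = c := by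
    intro n
    have := congrFun (congrArg ofLex h) n
    simpa [shiftA, cstA] using this
  have : ofLex s = fun n => if n = 0 then ofLex s 0 else c := by
    funext n
    cases n with
    | zero => simp
    | succ k => simp [key k]
  rw [← toLex_ofLex s, this]; rfl

private lemma sq_lt_sq_left {a b m : ℤ} (h : a < b) : sqA a m < sqA b m :=
  lex_lt_of _ _ 0 (fun j hj => absurd hj (Nat.not_lt_zero j)) (by simpa using h)

private lemma sq_lt_sq_left_elim {a b m : ℤ} (h : sqA a m < sqA b m) : a < b := by
  obtain ⟨i, _, hl⟩ := lex_lt_elim h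
  rcases Nat.eq_zero_or_pos i with rfl | hi
  · simpa using hl
  · simp only [if_neg (Nat.pos_iff_ne_zero.mp hi)] at hl
    omega

private lemma sq_self (m : ℤ) : sqA m m = cstA m := by
  unfold sqA cstA
  exact congrArg toLex (funext fun n => by split <;> rfl)

private lemma shiftA_iter_ofLex (n : ℕ) (s : Addr) :
    ofLex (shiftA^[n] s) 0 = ofLex s n := by
  induction n generalizing s with
  | zero => rfl
  | succ k ih =>
      rw [Function.iterate_succ_apply, ih]
      rfl

/-- **Self-conjugacies of the shift** (Lemma 8.3): every order-preserving bijection of the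
space of external addresses (with the lexicographic order) commuting with the shift is
given by adding a fixed integer `j` to every entry. -/
theorem shift_self_conjugacies (f : Addr → Addr) (hbij : Function.Bijective f)
    (hmono : StrictMono f) (hcomm : ∀ s : Addr, f (shiftA s) = shiftA (f s)) :
    ∃ j : ℤ, ∀ s : Addr, f s = toLex (fun n => ofLex s n + j) := by
  -- f maps constants to constants
  have hc : ∀ a : ℤ, f (cstA a) = cstA (ofLex (f (cstA a)) 0) := by
    intro a
    apply fixed_eq_cst
    rw [← hcomm, shiftA_cst]
  set g : ℤ → ℤ := fun a => ofLex (f (cstA a)) 0 with hgdef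
  have hg : ∀ a, f (cstA a) = cstA (g a) := hc
  have hgmono : StrictMono g := by
    intro a b hab
    exact cst_lt_cst_elim (by rw [← hg, ← hg]; exact hmono (cst_lt_cst hab))
  have hgsurj : Function.Surjective g := by
    intro c
    obtain ⟨s, hs⟩ := hbij.2 (cstA c)
    have hfix : shiftA s = s := by
      apply hbij.1
      rw [hcomm, hs, shiftA_cst]
    refine ⟨ofLex s 0, ?_⟩
    apply cst_inj
    rw [← hg, ← fixed_eq_cst hfix, hs]
  set j : ℤ := g 0 with hjdef
  have hgj : ∀ a, g a = a + j := int_translate g hgmono hgsurj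
  -- f maps sqA to sqA
  have hsq : ∀ a m : ℤ, f (sqA a m) = sqA (a + j) (m + j) := by
    intro a m
    have htail : ∀ a' : ℤ, f (sqA a' m) = sqA (ofLex (f (sqA a' m)) 0) (m + j) := by
      intro a'
      apply tail_cst_eq_sq
      rw [← hcomm, shiftA_sq, hg, hgj]
    set b : ℤ → ℤ := fun a' => ofLex (f (sqA a' m)) 0 with hbdef
    have hb : ∀ a', f (sqA a' m) = sqA (b a') (m + j) := htail
    have hbmono : StrictMono b := by
      intro x y hxy
      exact sq_lt_sq_left_elim (by rw [← hb, ← hb]; exact hmono (sq_lt_sq_left hxy))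
    have hbsurj : Function.Surjective b := by
      intro c
      obtain ⟨s, hs⟩ := hbij.2 (sqA c (m + j))
      have hfix : shiftA s = cstA m := by
        apply hbij.1
        rw [hcomm, hs, shiftA_sq, hg, hgj]
      have hseq : s = sqA (ofLex s 0) m := tail_cst_eq_sq hfix
      refine ⟨ofLex s 0, ?_⟩
      have h1 : sqA (b (ofLex s 0)) (m + j) = sqA c (m + j) := by
        rw [← hb, ← hseq, hs]
      have h2 := congrFun (congrArg ofLex h1) 0
      simpa [sqA] using h2
    have hbj : ∀ a', b a' = a' + b 0 := int_translate b hbmono hbsurj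
    have hbm : b m = m + j := by
      have : sqA (b m) (m + j) = cstA (m + j) := by
        rw [← hb, sq_self, hg, hgj]
      have h2 := congrFun (congrArg ofLex this) 0
      simpa [sqA, cstA] using h2
    have hb0 : b 0 = j := by have := hbj m; omega
    rw [hb a, hbj a, hb0]
  -- first entry of f s
  have h0 : ∀ s : Addr, ofLex (f s) 0 = ofLex s 0 + j := by
    intro s
    set a : ℤ := ofLex s 0 with hadef
    have hub : ofLex (f s) 0 ≤ a + j := by
      by_contra hcon
      push_neg at hcon
      have hlt : s < sqA (a + 1) (ofLex (f s) 1 - 1 - j) := by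
        conv_lhs => rw [← toLex_ofLex s]
        exact lex_lt_of _ _ 0 (fun j hj => absurd hj (Nat.not_lt_zero j))
          (by simp only [sqA, ofLex_toLex, reduceIte]; omega)
      have hthis := hmono hlt
      rw [hsq] at hthis
      obtain ⟨i, he, hl⟩ := lex_lt_elim (show toLex (ofLex (f s)) <
        toLex (fun n => if n = 0 then (a + 1 + j) else (ofLex (f s) 1 - 1 - j + j)) from hthis)
      rcases Nat.eq_zero_or_pos i with rfl | hi
      · simp only [ite_true] at hl
        omega
      · have he0 := he 0 hi
        simp only [if_pos] at he0
        have hi' : 1 ≤ i := hi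
        rcases eq_or_lt_of_le hi' with rfl | h2
        · simp only [Nat.one_ne_zero, if_false] at hl
          omega
        · have he1 := he 1 h2
          simp only [Nat.one_ne_zero, if_false] at he1
          omega
    have hlb : a + j ≤ ofLex (f s) 0 := by
      by_contra hcon
      push_neg at hcon
      have hlt : sqA (a - 1) (ofLex (f s) 1 + 1 - j) < s := by
        conv_rhs => rw [← toLex_ofLex s]
        exact lex_lt_of _ _ 0 (fun j hj => absurd hj (Nat.not_lt_zero j))
          (by simp only [sqA, ofLex_toLex, reduceIte]; omega)
      have hthis := hmono hlt
      rw [hsq] at hthis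
      obtain ⟨i, he, hl⟩ := lex_lt_elim (show
        toLex (fun n => if n = 0 then (a - 1 + j) else (ofLex (f s) 1 + 1 - j + j)) <
        toLex (ofLex (f s)) from hthis)
      rcases Nat.eq_zero_or_pos i with rfl | hi
      · simp only [ite_true] at hl
        omega
      · have he0 := (he 0 hi).symm
        simp only [if_pos] at he0
        have hi' : 1 ≤ i := hi
        rcases eq_or_lt_of_le hi' with rfl | h2
        · simp only [Nat.one_ne_zero, if_false] at hl
          omega
        · have he1 := (he 1 h2).symm
          simp only [Nat.one_ne_zero, if_false] at he1
          omega
    omega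
  -- commutation of iterates
  have hiter : ∀ (n : ℕ) (s : Addr), f (shiftA^[n] s) = shiftA^[n] (f s) := by
    intro n
    induction n with
    | zero => intro s; rfl
    | succ k ih =>
        intro s
        rw [Function.iterate_succ_apply, Function.iterate_succ_apply, ih, ← hcomm]
  have hn : ∀ (s : Addr) (n : ℕ), ofLex (f s) n = ofLex s n + j := by
    intro s n
    calc ofLex (f s) n = ofLex (shiftA^[n] (f s)) 0 := (shiftA_iter_ofLex n (f s)).symm
      _ = ofLex (f (shiftA^[n] s)) 0 := by rw [hiter]
      _ = ofLex (shiftA^[n] s) 0 + j := h0 _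
      _ = ofLex s n + j := by rw [shiftA_iter_ofLex]
  refine ⟨j, fun s => ?_⟩
  have : ofLex (f s) = fun n => ofLex s n + j := funext (hn s)
  conv_lhs => rw [← toLex_ofLex (f s)]
  rw [this]
end
end
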